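/- arXiv:1306.1378 — 6 statements merged into one kernel-verified Lean document; each statement's English description precedes it below -/
import Mathlib

section
/- Let (X_n)_{n in Z} be a stationary process with E|log X_0^{(j)}| < infinity for each coordinate j = 1,...,d, where X_n takes values in the positive orthant of R^d. Define Y_omega = max over portfolio functions b of E[log <b(X_{-omega}^{-1}), X_0> | X_{-omega}^{-1}], the conditional expected log-return of the log-optimal portfolio given the last omega observations. Then (Y_omega)_{omega >= 1} is a submartingale with respect to the filtration F_omega = sigma(X_{-omega}^{-1}); i.e., E[Y_{omega+1} | F_omega] >= Y_omega almost surely. -/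
open MeasureTheory Filter

/-- Submartingale property of the optimal conditional expected log-returns
`Y_ω = max_{b} E[log ⟨b(X_{-ω}^{-1}), X_0⟩ | X_{-ω}^{-1}]` for a stationary process
`(X_n)_{n ∈ ℤ}` with values in the positive orthant of `ℝ^d` and
`E|log X_0^{(j)}| < ∞`:  `E[Y_{ω+1} | F_ω] ≥ Y_ω` a.s., where
`F_ω = σ(X_{-ω}, …, X_{-1})`.  The maximum is encoded by a family `b` of
`F_ω`-measurable log-optimal portfolio-valued functions of the last `ω` observations. -/
theorem stmt5 {Ω : Type*} [m0 : MeasurableSpace Ω] (P : Measure Ω) [IsProbabilityMeasure P]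
    (d : ℕ) (X : ℤ → Ω → (Fin d → ℝ))
    (hXmeas : ∀ i, Measurable (X i))
    (hXpos : ∀ i ω j, 0 < X i ω j)
    (hstat : ∀ m : ℤ, Measure.map (fun ω => fun i : ℤ => X (i + m) ω) P
      = Measure.map (fun ω => fun i : ℤ => X i ω) P)
    (hint : ∀ j, Integrable (fun ω => |Real.log (X 0 ω j)|) P)
    -- the history of the last `w` observations `X_{-w}^{-1}` and the filtration it generates
    (hist : (w : ℕ) → Ω → (Fin w → Fin d → ℝ))
    (hhist : ∀ w ω k, hist w ω k = X (-(k : ℤ) - 1) ω)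
    (F : ℕ → MeasurableSpace Ω)
    (hF : ∀ w, F w = MeasurableSpace.comap (hist w) inferInstance)
    -- `b w` is a log-optimal portfolio as a function of the last `w` observations
    (b : (w : ℕ) → (Fin w → Fin d → ℝ) → (Fin d → ℝ))
    (hbmeas : ∀ w, Measurable (b w))
    (hbsimplex : ∀ w h, b w h ∈ stdSimplex ℝ (Fin d))
    (hopt : ∀ w, ∀ c : (Fin w → Fin d → ℝ) → (Fin d → ℝ), Measurable c →
      (∀ h, c h ∈ stdSimplex ℝ (Fin d)) →
      P[fun ω => Real.log (∑ j, c (hist w ω) j * X 0 ω j) | F w]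
        ≤ᵐ[P] P[fun ω => Real.log (∑ j, b w (hist w ω) j * X 0 ω j) | F w])
    -- `Y w` is the optimal conditional expected log-return
    (Y : ℕ → Ω → ℝ)
    (hY : ∀ w, Y w = P[fun ω => Real.log (∑ j, b w (hist w ω) j * X 0 ω j) | F w]) :
    ∀ w, Y w ≤ᵐ[P] P[Y (w + 1) | F w] := by

  intro w
  -- restriction map and the extended strategy
  set r : (Fin (w + 1) → Fin d → ℝ) → (Fin w → Fin d → ℝ) :=
    fun h k => h k.castSucc with hr
  have hrmeas : Measurable r :=
    measurable_pi_lambda _ (fun k => measurable_pi_apply _)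
  set c : (Fin (w + 1) → Fin d → ℝ) → (Fin d → ℝ) := fun h => b w (r h) with hc
  have hcmeas : Measurable c := (hbmeas w).comp hrmeas
  have hcsimplex : ∀ h, c h ∈ stdSimplex ℝ (Fin d) := fun h => hbsimplex w _
  have hkey : ∀ ω, c (hist (w + 1) ω) = b w (hist w ω) := by
    intro ω
    simp only [hc, hr]
    exact congrArg (b w) (funext fun k => by rw [hhist, hhist]; norm_num)
  -- hist w factors through hist (w+1)
  have hfact : hist w = r ∘ hist (w + 1) := by
    funext ω k
    simp only [Function.comp_apply, hr]
    rw [hhist, hhist]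
    norm_num [Fin.coe_castSucc]
  have hhistmeas : ∀ v, Measurable (hist v) := by
    intro v
    have : hist v = fun ω => fun k : Fin v => X (-(k : ℤ) - 1) ω := by
      funext ω k; exact hhist v ω k
    rw [this]
    exact measurable_pi_lambda _ (fun k => hXmeas _)
  have hle0 : ∀ v, F v ≤ m0 := by
    intro v
    rw [hF v]
    exact (hhistmeas v).comap_le
  have hle : F w ≤ F (w + 1) := by
    rw [hF w, hF (w + 1), hfact, ← MeasurableSpace.comap_comp]
    exact MeasurableSpace.comap_mono hrmeas.comap_le
  have h1 := hopt (w + 1) c hcmeas hcsimplex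
  have heq : (fun ω => Real.log (∑ j, c (hist (w + 1) ω) j * X 0 ω j))
      = fun ω => Real.log (∑ j, b w (hist w ω) j * X 0 ω j) := by
    funext ω; rw [hkey ω]
  rw [heq] at h1
  calc Y w = P[fun ω => Real.log (∑ j, b w (hist w ω) j * X 0 ω j) | F w] := hY w
    _ =ᵐ[P] P[P[fun ω => Real.log (∑ j, b w (hist w ω) j * X 0 ω j) | F (w + 1)] | F w] :=
        (condExp_condExp_of_le hle (hle0 (w + 1))).symm
    _ ≤ᵐ[P] P[Y (w + 1) | F w] := by
        rw [hY (w + 1)]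
        exact condExp_mono integrable_condExp integrable_condExp h1
end

section
/- Let X be an R^d-valued random vector with positive coordinates such that E|log X^{(j)}| < infinity for every j. If (F_k) is an increasing sequence of sub-sigma-fields with F_k increasing to F_infinity, then E[ max_b E[log <b, X> | F_k] ] increases to E[ max_b E[log <b, X> | F_infinity] ] as k -> infinity, where the maximum on each side is over F_k-measurable (respectively F_infinity-measurable) functions b taking values in the simplex Delta_d. -/
open MeasureTheory Filter Topology

/-- Algoet–Cover's lemma: for an `ℝ^d`-valued random vector `X` with positive
coordinates and `E|log X^{(j)}| < ∞`, and an increasing sequence of sub-σ-fields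
`F_k ↗ F_∞`, the optimal expected conditional log-returns
`E[max_b E[log ⟨b, X⟩ | F_k]]` increase to `E[max_b E[log ⟨b, X⟩ | F_∞]]`.
The maxima are encoded by families `b k` (resp. `b∞`) of `F_k`- (resp. `F_∞`-)measurable
simplex-valued functions that are conditionally log-optimal among such functions. -/
theorem stmt7 {Ω : Type*} [m0 : MeasurableSpace Ω] (P : Measure Ω) [IsProbabilityMeasure P]
    (d : ℕ) (X : Ω → (Fin d → ℝ)) (hXmeas : Measurable X)
    (hXpos : ∀ ω j, 0 < X ω j)
    (hint : ∀ j, Integrable (fun ω => |Real.log (X ω j)|) P)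
    (F : ℕ → MeasurableSpace Ω) (Finf : MeasurableSpace Ω)
    (hFle : ∀ k, F k ≤ m0) (hFmono : Monotone F)
    (hFinf : Finf = ⨆ k, F k)
    (b : ℕ → Ω → (Fin d → ℝ)) (binf : Ω → (Fin d → ℝ))
    (hbmeas : ∀ k, Measurable[F k] (b k)) (hbinfmeas : Measurable[Finf] binf)
    (hbsimplex : ∀ k ω, b k ω ∈ stdSimplex ℝ (Fin d))
    (hbinfsimplex : ∀ ω, binf ω ∈ stdSimplex ℝ (Fin d))
    (hopt : ∀ k, ∀ c : Ω → (Fin d → ℝ), Measurable[F k] c →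
      (∀ ω, c ω ∈ stdSimplex ℝ (Fin d)) →
      P[fun ω => Real.log (∑ j, c ω j * X ω j) | F k]
        ≤ᵐ[P] P[fun ω => Real.log (∑ j, b k ω j * X ω j) | F k])
    (hoptinf : ∀ c : Ω → (Fin d → ℝ), Measurable[Finf] c →
      (∀ ω, c ω ∈ stdSimplex ℝ (Fin d)) →
      P[fun ω => Real.log (∑ j, c ω j * X ω j) | Finf]
        ≤ᵐ[P] P[fun ω => Real.log (∑ j, binf ω j * X ω j) | Finf]) :
    Monotone (fun k => ∫ ω, (P[fun ω' => Real.log (∑ j, b k ω' j * X ω' j) | F k]) ω ∂P)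
      ∧ Tendsto (fun k => ∫ ω, (P[fun ω' => Real.log (∑ j, b k ω' j * X ω' j) | F k]) ω ∂P)
          atTop
          (nhds (∫ ω, (P[fun ω' => Real.log (∑ j, binf ω' j * X ω' j) | Finf]) ω ∂P)) := by
  classical
  -- Ω is nonempty
  have hΩ : Nonempty Ω := by
    by_contra h
    rw [not_nonempty_iff] at h
    have h1 : P Set.univ = 1 := measure_univ
    rw [Set.univ_eq_empty_iff.2 h, measure_empty] at h1
    exact zero_ne_one h1
  obtain ⟨ω0⟩ := hΩ
  -- d is positive
  have hd : 0 < d := by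
    rcases Nat.eq_zero_or_pos d with h | h
    · exfalso
      have h2 := (hbinfsimplex ω0).2
      subst h
      simp at h2
    · exact h
  set i0 : Fin d := ⟨0, hd⟩ with hi0
  have hFinfle : Finf ≤ m0 := by rw [hFinf]; exact iSup_le hFle
  have hFkinf : ∀ k, F k ≤ Finf := by intro k; rw [hFinf]; exact le_iSup F k
  set L : (Ω → Fin d → ℝ) → Ω → ℝ := fun c ω => Real.log (∑ j, c ω j * X ω j) with hLdef
  set bound : Ω → ℝ := fun ω => ∑ j, |Real.log (X ω j)| with hbounddef
  have hbound_int : Integrable bound P := integrable_finset_sum _ (fun j _ => hint j)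
  -- positivity of the return
  have hSpos : ∀ (v : Fin d → ℝ), v ∈ stdSimplex ℝ (Fin d) → ∀ ω, 0 < ∑ j, v j * X ω j := by
    intro v hv ω
    obtain ⟨j, hj⟩ : ∃ j, 0 < v j := by
      by_contra h
      push_neg at h
      have hz : ∑ j, v j = 0 := Finset.sum_eq_zero fun j _ => le_antisymm (h j) (hv.1 j)
      rw [hv.2] at hz; norm_num at hz
    refine lt_of_lt_of_le (mul_pos hj (hXpos ω j)) ?_
    exact Finset.single_le_sum (fun i _ => mul_nonneg (hv.1 i) (hXpos ω i).le) (Finset.mem_univ j)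
  -- uniform bound on |L c|
  have hbnd : ∀ (c : Ω → Fin d → ℝ), (∀ ω, c ω ∈ stdSimplex ℝ (Fin d)) →
      ∀ ω, |L c ω| ≤ bound ω := by
    intro c hc ω
    show |L c ω| ≤ ∑ j, |Real.log (X ω j)|
    obtain ⟨jM, _, hjM⟩ := Finset.exists_max_image Finset.univ (X ω) ⟨i0, Finset.mem_univ i0⟩
    obtain ⟨jm, _, hjm⟩ := Finset.exists_min_image Finset.univ (X ω) ⟨i0, Finset.mem_univ i0⟩
    have hs_pos : 0 < ∑ j, c ω j * X ω j := hSpos (c ω) (hc ω) ω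
    have hs_le : ∑ j, c ω j * X ω j ≤ X ω jM := by
      calc ∑ j, c ω j * X ω j ≤ ∑ j, c ω j * X ω jM :=
            Finset.sum_le_sum fun j _ =>
              mul_le_mul_of_nonneg_left (hjM j (Finset.mem_univ j)) ((hc ω).1 j)
        _ = X ω jM := by rw [← Finset.sum_mul, (hc ω).2, one_mul]
    have hs_ge : X ω jm ≤ ∑ j, c ω j * X ω j := by
      calc X ω jm = ∑ j, c ω j * X ω jm := by rw [← Finset.sum_mul, (hc ω).2, one_mul]
        _ ≤ ∑ j, c ω j * X ω j :=
            Finset.sum_le_sum fun j _ =>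
              mul_le_mul_of_nonneg_left (hjm j (Finset.mem_univ j)) ((hc ω).1 j)
    rw [abs_le]
    constructor
    · calc -(∑ j, |Real.log (X ω j)|) ≤ -|Real.log (X ω jm)| :=
            neg_le_neg (Finset.single_le_sum (f := fun j => |Real.log (X ω j)|)
              (fun j _ => abs_nonneg _) (Finset.mem_univ jm))
        _ ≤ Real.log (X ω jm) := neg_abs_le _
        _ ≤ L c ω := Real.log_le_log (hXpos ω jm) hs_ge
    · calc L c ω ≤ Real.log (X ω jM) := Real.log_le_log hs_pos hs_le
        _ ≤ |Real.log (X ω jM)| := le_abs_self _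
        _ ≤ ∑ j, |Real.log (X ω j)| := Finset.single_le_sum (f := fun j => |Real.log (X ω j)|)
            (fun j _ => abs_nonneg _) (Finset.mem_univ jM)
  -- measurability of L c
  have hmeasL : ∀ (c : Ω → Fin d → ℝ), Measurable[m0] c → Measurable[m0] (L c) := by
    intro c hc
    apply Real.measurable_log.comp
    exact Finset.measurable_sum _ fun j _ =>
      ((measurable_pi_apply j).comp hc).mul ((measurable_pi_apply j).comp hXmeas)
  -- integrability of L c
  have hintL : ∀ (c : Ω → Fin d → ℝ), Measurable[m0] c → (∀ ω, c ω ∈ stdSimplex ℝ (Fin d)) →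
      Integrable (L c) P := fun c hc hcs =>
    hbound_int.mono' (hmeasL c hc).aestronglyMeasurable
      (ae_of_all _ fun ω => by simpa only [Real.norm_eq_abs] using hbnd c hcs ω)
  -- from conditional optimality to integral inequality
  have hstep : ∀ (m : MeasurableSpace Ω) (hm : m ≤ m0) (c1 c2 : Ω → Fin d → ℝ),
      (P[L c1|m] ≤ᵐ[P] P[L c2|m]) → ∫ ω, L c1 ω ∂P ≤ ∫ ω, L c2 ω ∂P := by
    intro m hm c1 c2 h
    rw [← integral_condExp hm (f := L c1), ← integral_condExp hm (f := L c2)]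
    exact integral_mono_ae integrable_condExp integrable_condExp h
  have hmono : ∀ k l, k ≤ l → ∫ ω, L (b k) ω ∂P ≤ ∫ ω, L (b l) ω ∂P := fun k l hkl =>
    hstep (F l) (hFle l) (b k) (b l)
      (hopt l (b k) ((hbmeas k).mono (hFmono hkl) le_rfl) (hbsimplex k))
  have hleinf : ∀ k, ∫ ω, L (b k) ω ∂P ≤ ∫ ω, L binf ω ∂P := fun k =>
    hstep Finf hFinfle (b k) binf
      (hoptinf (b k) ((hbmeas k).mono (hFkinf k) le_rfl) (hbsimplex k))
  -- the filtration
  set ℱ : Filtration ℕ m0 := ⟨F, hFmono, hFle⟩ with hℱdef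
  have hsup : (⨆ n, ℱ n) = Finf := by rw [hFinf]
  have hbinf_meas : Measurable[m0] binf := hbinfmeas.mono hFinfle le_rfl
  have hg_meas : ∀ j, Measurable[m0] fun ω => binf ω j := fun j =>
    (measurable_pi_apply j).comp hbinf_meas
  have hg01 : ∀ ω j, binf ω j ≤ 1 := by
    intro ω j
    rw [← (hbinfsimplex ω).2]
    exact Finset.single_le_sum (fun i _ => (hbinfsimplex ω).1 i) (Finset.mem_univ j)
  have hg_int : ∀ j, Integrable (fun ω => binf ω j) P := by
    intro j
    refine (integrable_const (1 : ℝ)).mono' (hg_meas j).aestronglyMeasurable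
      (ae_of_all _ fun ω => ?_)
    rw [Real.norm_eq_abs, abs_of_nonneg ((hbinfsimplex ω).1 j)]
    exact hg01 ω j
  -- Lévy's upward theorem coordinatewise
  have htd : ∀ j, ∀ᵐ ω ∂P,
      Tendsto (fun k => (P[fun ω' => binf ω' j|F k]) ω) atTop (𝓝 (binf ω j)) := by
    intro j
    have hm : StronglyMeasurable[⨆ n, ℱ n] fun ω => binf ω j := by
      rw [hsup]
      exact ((measurable_pi_apply j).comp hbinfmeas).stronglyMeasurable
    exact (hg_int j).tendsto_ae_condExp hm
  -- a.e. properties of the conditional expectations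
  have h0 : ∀ k, ∀ᵐ ω ∂P, ∀ j, 0 ≤ (P[fun ω' => binf ω' j|F k]) ω := by
    intro k
    rw [ae_all_iff]
    intro j
    have := condExp_nonneg (μ := P) (m := F k) (f := fun ω' => binf ω' j)
      (ae_of_all _ fun ω => (hbinfsimplex ω).1 j)
    filter_upwards [this] with ω hω using hω
  have hsum1 : ∀ k, ∀ᵐ ω ∂P, ∑ j, (P[fun ω' => binf ω' j|F k]) ω = 1 := by
    intro k
    have h2 := condExp_finset_sum (μ := P) (m := F k) (s := Finset.univ)
      (f := fun j ω' => binf ω' j) (fun j _ => hg_int j)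
    have hconst : (∑ j, (fun ω' => binf ω' j)) = fun _ : Ω => (1 : ℝ) := by
      funext ω'
      simp only [Finset.sum_apply]
      exact (hbinfsimplex ω').2
    rw [hconst, condExp_const (hFle k)] at h2
    filter_upwards [h2] with ω hω
    have : (∑ j, P[fun ω' => binf ω' j|F k]) ω = ∑ j, (P[fun ω' => binf ω' j|F k]) ω := by
      simp [Finset.sum_apply]
    rw [this] at hω
    exact hω.symm
  -- the approximating portfolios
  set S : ℕ → Set Ω := fun k => {ω | (∀ j, 0 ≤ (P[fun ω' => binf ω' j|F k]) ω) ∧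
      ∑ j, (P[fun ω' => binf ω' j|F k]) ω = 1} with hSdef
  have hSmeas : ∀ k, MeasurableSet[F k] (S k) := by
    intro k
    have hA : MeasurableSet[F k] {ω | ∀ j, 0 ≤ (P[fun ω' => binf ω' j|F k]) ω} := by
      rw [Set.setOf_forall]
      exact MeasurableSet.iInter fun j =>
        measurableSet_le measurable_const stronglyMeasurable_condExp.measurable
    have hB : MeasurableSet[F k] {ω | ∑ j, (P[fun ω' => binf ω' j|F k]) ω = 1} :=
      measurableSet_eq_fun
        (Finset.measurable_sum _ fun j _ => stronglyMeasurable_condExp.measurable)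
        measurable_const
    exact hA.inter hB
  set c : ℕ → Ω → Fin d → ℝ := fun k ω j =>
    if ω ∈ S k then (P[fun ω' => binf ω' j|F k]) ω else (if j = i0 then 1 else 0) with hcdef
  have hcmeas : ∀ k, Measurable[F k] (c k) := by
    intro k
    have h2 : ∀ j, Measurable[F k] fun ω => c k ω j := by
      intro j
      have h1 : Measurable[F k] (P[fun ω' => binf ω' j|F k]) :=
        stronglyMeasurable_condExp.measurable
      exact Measurable.ite (hSmeas k) h1 measurable_const
    exact @measurable_pi_lambda Ω (Fin d) (fun _ => ℝ) (F k) (fun _ => inferInstance) (c k) h2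
  have hcsimplex : ∀ k ω, c k ω ∈ stdSimplex ℝ (Fin d) := by
    intro k ω
    by_cases hω : ω ∈ S k
    · constructor
      · intro j; simp only [hcdef, if_pos hω]; exact hω.1 j
      · simp only [hcdef, if_pos hω]; exact hω.2
    · constructor
      · intro j; simp only [hcdef, if_neg hω]; split <;> norm_num
      · simp only [hcdef, if_neg hω]; simp
  have hSae : ∀ᵐ ω ∂P, ∀ k, ω ∈ S k := by
    rw [ae_all_iff]
    intro k
    filter_upwards [h0 k, hsum1 k] with ω h1 h2
    exact ⟨h1, h2⟩
  -- a.e. convergence of the log-returns of the approximations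
  have hctend : ∀ᵐ ω ∂P, Tendsto (fun k => L (c k) ω) atTop (𝓝 (L binf ω)) := by
    have htd' : ∀ᵐ ω ∂P, ∀ j,
        Tendsto (fun k => (P[fun ω' => binf ω' j|F k]) ω) atTop (𝓝 (binf ω j)) := by
      rw [ae_all_iff]; exact htd
    filter_upwards [hSae, htd'] with ω hSω htdω
    have hceq : ∀ k j, c k ω j = (P[fun ω' => binf ω' j|F k]) ω := fun k j => if_pos (hSω k)
    have hsumt : Tendsto (fun k => ∑ j, c k ω j * X ω j) atTop
        (𝓝 (∑ j, binf ω j * X ω j)) := by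
      apply tendsto_finset_sum
      intro j _
      simp only [hceq]
      exact (htdω j).mul_const _
    exact ((Real.continuousAt_log
      (ne_of_gt (hSpos (binf ω) (hbinfsimplex ω) ω))).tendsto.comp hsumt)
  -- dominated convergence
  have hdom : Tendsto (fun k => ∫ ω, L (c k) ω ∂P) atTop (𝓝 (∫ ω, L binf ω ∂P)) := by
    refine tendsto_integral_of_dominated_convergence bound
      (fun k => (hmeasL (c k) ((hcmeas k).mono (hFle k) le_rfl)).aestronglyMeasurable)
      hbound_int
      (fun k => ae_of_all _ fun ω => by
        simpa only [Real.norm_eq_abs] using hbnd (c k) (hcsimplex k) ω)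
      hctend
  have hlow : ∀ k, ∫ ω, L (c k) ω ∂P ≤ ∫ ω, L (b k) ω ∂P := fun k =>
    hstep (F k) (hFle k) (c k) (b k) (hopt k (c k) (hcmeas k) (hcsimplex k))
  -- rewrite the goal
  have hgoal_eq : ∀ (m : MeasurableSpace Ω) (hm : m ≤ m0) (cc : Ω → Fin d → ℝ),
      ∫ ω, (P[fun ω' => Real.log (∑ j, cc ω' j * X ω' j)|m]) ω ∂P = ∫ ω, L cc ω ∂P :=
    fun m hm cc => integral_condExp hm
  have he : (fun k => ∫ ω, (P[fun ω' => Real.log (∑ j, b k ω' j * X ω' j)|F k]) ω ∂P)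
      = fun k => ∫ ω, L (b k) ω ∂P := funext fun k => hgoal_eq (F k) (hFle k) (b k)
  rw [he, hgoal_eq Finf hFinfle binf]
  refine ⟨fun k l hkl => hmono k l hkl, ?_⟩
  exact tendsto_of_tendsto_of_tendsto_of_le_of_le hdom tendsto_const_nhds hlow hleinf
end

section
/- Let (X_n)_{n in Z} be a stationary ergodic process taking values in the positive orthant of R^d, and fix s in R^{d*omega} and a threshold c > 0 with P(||X_{-omega}^{-1} - s||^2 <= c) > 0. For each j, let P_{j,s} be the empirical measure on R^d_+ putting equal mass on those X_i with 1-j+omega <= i <= 0 for which ||X_{i-omega}^{i-1} - s||^2 <= c. Then for every bounded continuous function f on R^d_+, the integral of f with respect to P_{j,s} converges almost surely, as j -> infinity, to E[f(X_0) | ||X_{-omega}^{-1} - s||^2 <= c]; i.e., P_{j,s} converges weakly to the conditional law of X_0 given the event {||X_{-omega}^{-1} - s||^2 <= c}, almost surely. -/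
set_option linter.unusedSectionVars false

open MeasureTheory Filter Metric

namespace CornAux

variable {Ω : Type*} [m0 : MeasurableSpace Ω]

noncomputable def bS (T : Ω → Ω) (g : Ω → ℝ) (n : ℕ) (ω : Ω) : ℝ :=
  ∑ i ∈ Finset.range n, g (T^[i] ω)

lemma bS_zero (T : Ω → Ω) (g : Ω → ℝ) (ω : Ω) : bS T g 0 ω = 0 := by simp [bS]

lemma bS_succ (T : Ω → Ω) (g : Ω → ℝ) (n : ℕ) (ω : Ω) :
    bS T g (n + 1) ω = g ω + bS T g n (T ω) := by
  rw [bS, Finset.sum_range_succ']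
  simp [bS, Function.iterate_succ_apply, add_comm]

lemma bS_measurable {T : Ω → Ω} (hTm : Measurable T) {g : Ω → ℝ} (hg : Measurable g) (n : ℕ) :
    Measurable (bS T g n) :=
  Finset.measurable_sum _ fun i _ => hg.comp (hTm.iterate i)

lemma bS_abs_le {T : Ω → Ω} {g : Ω → ℝ} {C : ℝ} (hC : ∀ ω, |g ω| ≤ C) (n : ℕ) (ω : Ω) :
    |bS T g n ω| ≤ n * C := by
  calc |bS T g n ω| ≤ ∑ i ∈ Finset.range n, |g (T^[i] ω)| := Finset.abs_sum_le_sum_abs _ _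
  _ ≤ ∑ _i ∈ Finset.range n, C := Finset.sum_le_sum fun i _ => hC _
  _ = n * C := by simp [mul_comm]

lemma integrable_of_bound (P : Measure Ω) [IsProbabilityMeasure P] {g : Ω → ℝ} {C : ℝ}
    (hg : Measurable g) (hgC : ∀ ω, |g ω| ≤ C) : Integrable g P :=
  ⟨hg.aestronglyMeasurable, HasFiniteIntegral.of_bounded (C := C)
    (Eventually.of_forall fun ω => by simpa using hgC ω)⟩

noncomputable def bM (T : Ω → Ω) (g : Ω → ℝ) : ℕ → Ω → ℝ
  | 0 => fun _ => 0
  | (N + 1) => fun ω => max (bM T g N ω) (bS T g (N + 1) ω)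

lemma bM_nonneg (T : Ω → Ω) (g : Ω → ℝ) (N : ℕ) (ω : Ω) : 0 ≤ bM T g N ω := by
  induction N with
  | zero => exact le_refl _
  | succ N ih => exact le_trans ih (le_max_left _ _)

lemma bM_mono (T : Ω → Ω) (g : Ω → ℝ) (N : ℕ) (ω : Ω) : bM T g N ω ≤ bM T g (N + 1) ω :=
  le_max_left _ _

lemma bS_le_bM (T : Ω → Ω) (g : Ω → ℝ) {k N : ℕ} (hk : k ≤ N) (hk1 : 1 ≤ k) (ω : Ω) :
    bS T g k ω ≤ bM T g N ω := by
  induction N with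
  | zero => omega
  | succ N ih =>
    rcases Nat.lt_or_ge k (N + 1) with h | h
    · exact le_trans (ih (by omega)) (le_max_left _ _)
    · have hke : k = N + 1 := by omega
      subst hke; exact le_max_right _ _

lemma bM_pos_exists (T : Ω → Ω) (g : Ω → ℝ) {N : ℕ} {ω : Ω} (h : 0 < bM T g N ω) :
    ∃ k, 1 ≤ k ∧ k ≤ N ∧ bM T g N ω = bS T g k ω := by
  induction N with
  | zero => simp [bM] at h
  | succ N ih =>
    rcases le_or_gt (bS T g (N + 1) ω) (bM T g N ω) with hle | hlt
    · have hmax : bM T g (N + 1) ω = bM T g N ω := max_eq_left hle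
      rw [hmax] at h ⊢
      obtain ⟨k, h1, h2, h3⟩ := ih h
      exact ⟨k, h1, by omega, h3⟩
    · have hmax : bM T g (N + 1) ω = bS T g (N + 1) ω := max_eq_right hlt.le
      exact ⟨N + 1, by omega, le_refl _, hmax⟩

lemma bM_measurable {T : Ω → Ω} (hTm : Measurable T) {g : Ω → ℝ} (hg : Measurable g) (N : ℕ) :
    Measurable (bM T g N) := by
  induction N with
  | zero => exact measurable_const
  | succ N ih => exact ih.max (bS_measurable hTm hg (N + 1))

lemma bM_le {T : Ω → Ω} {g : Ω → ℝ} {C : ℝ} (hC : 0 ≤ C) (hgC : ∀ ω, |g ω| ≤ C)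
    (N : ℕ) (ω : Ω) : bM T g N ω ≤ N * C := by
  induction N with
  | zero => simp [bM]
  | succ N ih =>
    refine max_le (le_trans ih ?_) ?_
    · push_cast
      nlinarith
    · have h2 := (abs_le.mp (bS_abs_le (T := T) hgC (N + 1) ω)).2
      push_cast at h2 ⊢
      linarith

lemma bM_integrable (P : Measure Ω) [IsProbabilityMeasure P] {T : Ω → Ω} (hTm : Measurable T)
    {g : Ω → ℝ} {C : ℝ} (hC : 0 ≤ C) (hg : Measurable g) (hgC : ∀ ω, |g ω| ≤ C) (N : ℕ) :
    Integrable (bM T g N) P := by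
  refine integrable_of_bound P (bM_measurable hTm hg N) (C := N * C) fun ω => ?_
  rw [abs_of_nonneg (bM_nonneg T g N ω)]
  exact bM_le hC hgC N ω

/-- Key pointwise inequality for the maximal ergodic theorem (Garsia's trick). -/
lemma bM_key (T : Ω → Ω) (g : Ω → ℝ) (N : ℕ) (ω : Ω) :
    bM T g N ω - bM T g N (T ω) ≤ Set.indicator {ω | 0 < bM T g N ω} g ω := by
  by_cases h0 : 0 < bM T g N ω
  · rw [Set.indicator_of_mem (show ω ∈ {ω | 0 < bM T g N ω} from h0) g]
    obtain ⟨k, hk1, hkN, hEq⟩ := bM_pos_exists T g h0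
    obtain ⟨j, rfl⟩ : ∃ j, k = j + 1 := ⟨k - 1, by omega⟩
    have h1 : bS T g (j + 1) ω = g ω + bS T g j (T ω) := bS_succ T g j ω
    rcases Nat.eq_zero_or_pos j with hj | hj
    · subst hj
      have := bM_nonneg T g N (T ω)
      rw [hEq, h1, bS_zero]
      linarith
    · have h2 : bS T g j (T ω) ≤ bM T g N (T ω) := bS_le_bM T g (by omega) hj (T ω)
      rw [hEq, h1]; linarith
  · rw [Set.indicator_of_notMem (show ω ∉ {ω | 0 < bM T g N ω} from h0) g]
    have h1 : bM T g N ω = 0 := le_antisymm (not_lt.1 h0) (bM_nonneg T g N ω)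
    have h2 := bM_nonneg T g N (T ω)
    linarith

/-- The maximal ergodic theorem. -/
lemma maximal_ergodic (P : Measure Ω) [IsProbabilityMeasure P] {T : Ω → Ω}
    (hT : MeasurePreserving T P P) {g : Ω → ℝ} {C : ℝ} (hC : 0 ≤ C)
    (hg : Measurable g) (hgC : ∀ ω, |g ω| ≤ C) :
    0 ≤ ∫ ω, Set.indicator (⋃ N, {ω | 0 < bM T g N ω}) g ω ∂P := by
  have hTm : Measurable T := hT.measurable
  have hgi : Integrable g P := integrable_of_bound P hg hgC
  set A : ℕ → Set Ω := fun N => {ω | 0 < bM T g N ω} with hA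
  have hAmeas : ∀ N, MeasurableSet (A N) :=
    fun N => measurableSet_lt measurable_const (bM_measurable hTm hg N)
  have hAU : MeasurableSet (⋃ N, A N) := MeasurableSet.iUnion hAmeas
  -- each finite-level integral is nonnegative
  have hstep : ∀ N, 0 ≤ ∫ ω, Set.indicator (A N) g ω ∂P := by
    intro N
    have hint : Integrable (bM T g N) P := bM_integrable P hTm hC hg hgC N
    have hcomp : Integrable (fun ω => bM T g N (T ω)) P := by
      refine integrable_of_bound P ((bM_measurable hTm hg N).comp hTm) (C := N * C) fun ω => ?_
      rw [abs_of_nonneg (bM_nonneg T g N (T ω))]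
      exact bM_le hC hgC N (T ω)
    have hzero : ∫ ω, (bM T g N ω - bM T g N (T ω)) ∂P = 0 := by
      rw [integral_sub hint hcomp]
      have hmapsm : AEStronglyMeasurable (bM T g N) (P.map T) := by
        rw [hT.map_eq]; exact hint.aestronglyMeasurable
      have h3 : ∫ ω, bM T g N ω ∂(P.map T) = ∫ ω, bM T g N (T ω) ∂P :=
        integral_map hTm.aemeasurable hmapsm
      rw [hT.map_eq] at h3
      rw [h3.symm, sub_self]
    have hmono : ∫ ω, (bM T g N ω - bM T g N (T ω)) ∂P
        ≤ ∫ ω, Set.indicator (A N) g ω ∂P := by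
      refine integral_mono (hint.sub hcomp) (hgi.indicator (hAmeas N)) ?_
      intro ω
      exact bM_key T g N ω
    linarith
  -- dominated convergence as N → ∞
  have hmonoA : Monotone A := monotone_nat_of_le_succ fun N ω hω =>
    lt_of_lt_of_le hω (bM_mono T g N ω)
  have hptw : ∀ ω, Tendsto (fun N => Set.indicator (A N) g ω) atTop
      (nhds (Set.indicator (⋃ N, A N) g ω)) := by
    intro ω
    by_cases hω : ω ∈ ⋃ N, A N
    · obtain ⟨N0, hN0⟩ := Set.mem_iUnion.mp hω
      rw [Set.indicator_of_mem hω]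
      have hev : ∀ᶠ N in atTop, Set.indicator (A N) g ω = g ω :=
        eventually_atTop.mpr ⟨N0, fun N hN => Set.indicator_of_mem (hmonoA hN hN0) g⟩
      exact Tendsto.congr' (hev.mono fun N h => h.symm) tendsto_const_nhds
    · rw [Set.indicator_of_notMem hω]
      have hall : ∀ N, Set.indicator (A N) g ω = 0 := fun N =>
        Set.indicator_of_notMem (fun h => hω (Set.mem_iUnion.mpr ⟨N, h⟩)) g
      simpa [hall] using tendsto_const_nhds (x := (0 : ℝ)) (f := atTop (α := ℕ))
  have hdom : Tendsto (fun N => ∫ ω, Set.indicator (A N) g ω ∂P) atTop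
      (nhds (∫ ω, Set.indicator (⋃ N, A N) g ω ∂P)) := by
    refine tendsto_integral_of_dominated_convergence (fun _ => C)
      (fun N => (hgi.indicator (hAmeas N)).aestronglyMeasurable)
      (integrable_const C) (fun N => Eventually.of_forall fun ω => ?_)
      (Eventually.of_forall hptw)
    calc ‖Set.indicator (A N) g ω‖ ≤ ‖g ω‖ := norm_indicator_le_norm_self (f := g) (a := ω)
    _ ≤ C := by simpa using hgC ω
  exact ge_of_tendsto hdom (Eventually.of_forall hstep)

lemma freq_transfer {u v : ℕ → ℝ} {q q' : ℝ} (hq : q' < q)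
    (h0 : Tendsto (fun n => u n - v n) atTop (nhds 0))
    (hfreq : ∀ N, ∃ n, N ≤ n ∧ q ≤ v n) :
    ∀ N, ∃ n, N ≤ n ∧ q' ≤ u n := by
  have hev : ∀ᶠ n in atTop, |u n - v n| < q - q' := by
    have := h0.eventually (eventually_abs_sub_lt 0 (show (0:ℝ) < q - q' by linarith))
    simpa using this
  obtain ⟨M, hM⟩ := eventually_atTop.mp hev
  intro N
  obtain ⟨n, hn1, hn2⟩ := hfreq (max N M)
  refine ⟨n, le_trans (le_max_left _ _) hn1, ?_⟩
  have h1 := abs_lt.mp (hM n (le_trans (le_max_right _ _) hn1))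
  linarith [h1.1]

/-- One-sided Birkhoff bound via the maximal ergodic theorem. -/
lemma upper (P : Measure Ω) [IsProbabilityMeasure P] {T : Ω → Ω} (hT : Ergodic T P)
    {g : Ω → ℝ} {C : ℝ} (hg : Measurable g) (hgC : ∀ ω, |g ω| ≤ C) {ε : ℝ} (hε : 0 < ε) :
    ∀ᵐ ω ∂P, ∀ᶠ n in atTop, bS T g n ω / n < ∫ x, g x ∂P + ε := by
  have hTm : Measurable T := hT.toMeasurePreserving.measurable
  have hC : 0 ≤ C := by
    rcases Set.eq_empty_or_nonempty (Set.univ : Set Ω) with he | ⟨ω0, _⟩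
    · have h1 : P Set.univ = 1 := measure_univ
      rw [he] at h1; simp at h1
    · exact le_trans (abs_nonneg _) (hgC ω0)
  set I := ∫ x, g x ∂P with hI
  set α := I + ε / 2 with hα
  set E : Set Ω := {ω | ∃ q : ℚ, α < (q:ℝ) ∧ ∀ N : ℕ, ∃ n, N ≤ n ∧ (q:ℝ) ≤ bS T g n ω / n}
    with hE
  have hE_eq : E = ⋃ (q : ℚ), ⋂ (N : ℕ), ⋃ (n : ℕ),
      {ω | α < (q:ℝ) ∧ N ≤ n ∧ (q:ℝ) ≤ bS T g n ω / n} := by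
    ext ω
    simp only [hE, Set.mem_iUnion, Set.mem_iInter, Set.mem_setOf_eq]
    constructor
    · rintro ⟨q, hq, hfreq⟩
      exact ⟨q, fun N => (hfreq N).imp fun n hn => ⟨hq, hn.1, hn.2⟩⟩
    · rintro ⟨q, hq⟩
      obtain ⟨n0, hn0⟩ := hq 0
      exact ⟨q, hn0.1, fun N => (hq N).imp fun n hn => ⟨hn.2.1, hn.2.2⟩⟩
  have hEmeas : MeasurableSet E := by
    rw [hE_eq]
    refine MeasurableSet.iUnion fun q => MeasurableSet.iInter fun N =>
      MeasurableSet.iUnion fun n => ?_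
    by_cases h1 : α < (q:ℝ)
    · by_cases h2 : N ≤ n
      · simp only [h1, h2, true_and]
        exact measurableSet_le measurable_const ((bS_measurable hTm hg n).div_const _)
      · simp [h2]
    · simp [h1]
  have herr : ∀ ω, Tendsto (fun n : ℕ => bS T g n (T ω) / n - bS T g (n+1) ω / (n+1))
      atTop (nhds 0) := by
    intro ω
    refine squeeze_zero_norm' ?_ (tendsto_const_div_atTop_nhds_zero_nat (2 * C))
    refine eventually_atTop.mpr ⟨1, fun n hn => ?_⟩
    have hn' : (0:ℝ) < n := by exact_mod_cast Nat.pos_of_ne_zero (by omega)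
    have hn1 : (0:ℝ) < (n:ℝ) + 1 := by linarith
    have hrel : bS T g n (T ω) = bS T g (n+1) ω - g ω := by rw [bS_succ]; ring
    have ha := bS_abs_le (T := T) hgC (n+1) ω
    push_cast at ha
    have habs := abs_le.mp ha
    have hg1 := abs_le.mp (hgC ω)
    rw [Real.norm_eq_abs, hrel]
    have e1 : (bS T g (n+1) ω - g ω) / n - bS T g (n+1) ω / ((n:ℝ)+1)
        = (bS T g (n+1) ω - ((n:ℝ)+1) * g ω) / ((n:ℝ) * ((n:ℝ)+1)) := by
      field_simp; ring
    rw [e1, abs_div, abs_of_pos (mul_pos hn' hn1), div_le_div_iff₀ (mul_pos hn' hn1) hn']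
    have h2 : |bS T g (n+1) ω - ((n:ℝ)+1) * g ω| ≤ ((n:ℝ)+1) * C + ((n:ℝ)+1) * C := by
      calc |bS T g (n+1) ω - ((n:ℝ)+1) * g ω| ≤ |bS T g (n+1) ω| + |((n:ℝ)+1) * g ω| :=
            abs_sub _ _
      _ ≤ ((n:ℝ)+1) * C + ((n:ℝ)+1) * C := by
          refine add_le_add ha ?_
          rw [abs_mul, abs_of_pos hn1]
          exact mul_le_mul_of_nonneg_left (hgC ω) hn1.le
    nlinarith [abs_nonneg (bS T g (n+1) ω - ((n:ℝ)+1) * g ω), le_abs_self (bS T g (n+1) ω - ((n:ℝ)+1) * g ω)]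
  have hinv : T ⁻¹' E = E := by
    ext ω
    simp only [Set.mem_preimage, hE, Set.mem_setOf_eq]
    constructor
    · rintro ⟨q, hq, hfreq⟩
      obtain ⟨q', hq'1, hq'2⟩ := exists_rat_btwn hq
      refine ⟨q', hq'1, ?_⟩
      have h1 : ∀ N : ℕ, ∃ n, N ≤ n ∧ (q':ℝ) ≤ bS T g (n+1) ω / ((n:ℝ)+1) := by
        refine freq_transfer (by exact_mod_cast hq'2) ?_ hfreq
        have := (herr ω).neg
        simpa [neg_sub] using this
      intro N
      obtain ⟨n, hn1, hn2⟩ := h1 N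
      exact ⟨n + 1, by omega, by push_cast; exact hn2⟩
    · rintro ⟨q, hq, hfreq⟩
      obtain ⟨q', hq'1, hq'2⟩ := exists_rat_btwn hq
      refine ⟨q', hq'1, ?_⟩
      have hshift : ∀ N : ℕ, ∃ n, N ≤ n ∧ (q:ℝ) ≤ bS T g (n+1) ω / ((n:ℝ)+1) := by
        intro N
        obtain ⟨n, hn1, hn2⟩ := hfreq (N + 1)
        obtain ⟨m, rfl⟩ : ∃ m, n = m + 1 := ⟨n - 1, by omega⟩
        exact ⟨m, by omega, by push_cast at hn2 ⊢; exact hn2⟩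
      exact freq_transfer (by exact_mod_cast hq'2) (herr ω) hshift
  rcases hT.ae_empty_or_univ hEmeas hinv with hE0 | hE1
  · -- E is null: the desired bound holds a.e.
    have hPE : P E = 0 := by simpa using measure_congr hE0
    have hae : ∀ᵐ ω ∂P, ω ∉ E := by
      rw [ae_iff]
      simpa [not_not, Set.setOf_mem_eq] using hPE
    filter_upwards [hae] with ω hω
    obtain ⟨q, hq1, hq2⟩ := exists_rat_btwn (show α < I + ε by rw [hα]; linarith)
    simp only [hE, Set.mem_setOf_eq, not_exists, not_and, not_forall, not_exists, not_le] at hω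
    obtain ⟨N, hN⟩ := hω q hq1
    refine eventually_atTop.mpr ⟨N, fun n hn => ?_⟩
    exact lt_trans (hN n hn) hq2
  · -- E is conull: contradiction with the maximal ergodic theorem
    exfalso
    have hPE : P E = 1 := by
      have := measure_congr hE1
      simpa using this
    set h : Ω → ℝ := fun ω => g ω - α with hh
    have hh_meas : Measurable h := hg.sub measurable_const
    have hhC : ∀ ω, |h ω| ≤ C + |α| := fun ω =>
      (abs_sub _ _).trans (add_le_add (hgC ω) le_rfl)
    have hCh : (0:ℝ) ≤ C + |α| := by positivity
    have hmax := maximal_ergodic P hT.toMeasurePreserving hCh hh_meas hhC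
    set A : Set Ω := ⋃ N, {ω | 0 < bM T h N ω} with hA
    have hAmeas : MeasurableSet A := MeasurableSet.iUnion fun N =>
      measurableSet_lt measurable_const (bM_measurable hTm hh_meas N)
    have hEA : E ⊆ A := by
      intro ω hω
      obtain ⟨q, hq, hfreq⟩ := hω
      obtain ⟨n, hn1, hn2⟩ := hfreq 1
      have hn' : (0:ℝ) < n := by exact_mod_cast Nat.pos_of_ne_zero (by omega)
      have hbSh : bS T h n ω = bS T g n ω - n * α := by
        simp [bS, hh, Finset.sum_sub_distrib, mul_comm]
      have hql : (q:ℝ) * n ≤ bS T g n ω := (le_div_iff₀ hn').mp hn2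
      have hpos : 0 < bS T h n ω := by
        rw [hbSh]
        nlinarith
      have hbm : 0 < bM T h n ω := lt_of_lt_of_le hpos (bS_le_bM T h le_rfl hn1 ω)
      exact Set.mem_iUnion.mpr ⟨n, hbm⟩
    have hPA : P A = 1 := le_antisymm prob_le_one (by rw [← hPE]; exact measure_mono hEA)
    have hAc : P Aᶜ = 0 := by
      rw [measure_compl hAmeas (measure_ne_top _ _), hPA]; simp
    have hind : Set.indicator A h =ᵐ[P] h := by
      have hmem : ∀ᵐ ω ∂P, ω ∈ A := by
        rw [ae_iff]
        exact hAc
      filter_upwards [hmem] with ω hω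
      exact Set.indicator_of_mem hω h
    have hint_h : ∫ ω, h ω ∂P = I - α := by
      rw [hh]
      rw [integral_sub (integrable_of_bound P hg hgC) (integrable_const α)]
      simp [hI]
    rw [integral_congr_ae hind, hint_h] at hmax
    rw [hα] at hmax
    linarith

/-- Birkhoff's pointwise ergodic theorem for bounded measurable functions. -/
theorem birkhoff_bounded (P : Measure Ω) [IsProbabilityMeasure P] {T : Ω → Ω} (hT : Ergodic T P)
    {g : Ω → ℝ} {C : ℝ} (hg : Measurable g) (hgC : ∀ ω, |g ω| ≤ C) :
    ∀ᵐ ω ∂P, Tendsto (fun n => bS T g n ω / n) atTop (nhds (∫ x, g x ∂P)) := by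
  have hup : ∀ᵐ ω ∂P, ∀ k : ℕ, ∀ᶠ n in atTop,
      bS T g n ω / n < ∫ x, g x ∂P + 1 / ((k:ℝ) + 1) := by
    rw [ae_all_iff]
    intro k
    exact upper P hT hg hgC (by positivity)
  have hlo : ∀ᵐ ω ∂P, ∀ k : ℕ, ∀ᶠ n in atTop,
      ∫ x, g x ∂P - 1 / ((k:ℝ) + 1) < bS T g n ω / n := by
    rw [ae_all_iff]
    intro k
    have hneg : ∀ ω, |(fun x => -g x) ω| ≤ C := fun ω => by simpa [abs_neg] using hgC ω
    have h := upper P hT hg.neg hneg (ε := 1 / ((k:ℝ) + 1)) (by positivity)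
    filter_upwards [h] with ω hω
    have hbs : ∀ n, bS T (fun x => -g x) n ω = - bS T g n ω := fun n => by simp [bS]
    have hint : ∫ x, -g x ∂P = - ∫ x, g x ∂P := by rw [integral_neg]
    filter_upwards [hω] with n hn
    change bS T (fun x => -g x) n ω / ↑n < ∫ x, -g x ∂P + 1 / ((k:ℝ) + 1) at hn
    rw [hbs, hint, neg_div] at hn
    linarith
  filter_upwards [hup, hlo] with ω h1 h2
  rw [Metric.tendsto_atTop]
  intro ε hε
  obtain ⟨k, hk⟩ := exists_nat_one_div_lt hε
  obtain ⟨N1, hN1⟩ := eventually_atTop.mp (h1 k)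
  obtain ⟨N2, hN2⟩ := eventually_atTop.mp (h2 k)
  refine ⟨max N1 N2, fun n hn => ?_⟩
  have e1 := hN1 n (le_trans (le_max_left _ _) hn)
  have e2 := hN2 n (le_trans (le_max_right _ _) hn)
  rw [Real.dist_eq, abs_lt]
  constructor <;> linarith

lemma ratio_tendsto {u v : ℕ → ℝ} {a b : ℝ} (hb : b ≠ 0)
    (hu : Tendsto (fun n : ℕ => u n / n) atTop (nhds a))
    (hv : Tendsto (fun n : ℕ => v n / n) atTop (nhds b)) :
    Tendsto (fun n : ℕ => u n / v n) atTop (nhds (a / b)) := by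
  have hdiv := hu.div hv hb
  refine hdiv.congr' ?_
  filter_upwards [eventually_ge_atTop 1] with n h2
  have hn' : (0:ℝ) < n := by exact_mod_cast Nat.pos_of_ne_zero (by omega)
  show (u n / ↑n) / (v n / ↑n) = u n / v n
  rw [div_div_div_comm, div_self hn'.ne', div_one]

end CornAux

open MeasureTheory Filter Metric

/-- Convergence of the empirical conditional measures (equation (2) in the CORN
universality proof): for a stationary ergodic process `(X_n)_{n∈ℤ}` in the positive
orthant of `ℝ^d` (realized by an ergodic shift `T` with `X_i ∘ T = X_{i-1}`), a fixed
pattern `s ∈ ℝ^{dω}` and threshold `c > 0` with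
`P(‖X_{-ω}^{-1} - s‖² ≤ c) > 0`, the empirical measure `P_{j,s}` putting equal mass on
those `X_i`, `1-j+ω ≤ i ≤ 0`, whose preceding block `X_{i-ω}^{i-1}` satisfies
`‖X_{i-ω}^{i-1} - s‖² ≤ c`, integrates every bounded continuous `f` to
`E[f(X_0) | ‖X_{-ω}^{-1} - s‖² ≤ c]` in the limit `j → ∞`, almost surely. -/
theorem stmt10 {Ω : Type*} [m0 : MeasurableSpace Ω] (P : Measure Ω) [IsProbabilityMeasure P]
    (d w : ℕ) (hw : 0 < w) (X : ℤ → Ω → (Fin d → ℝ))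
    (hXmeas : ∀ i, Measurable (X i)) (hXpos : ∀ i ω j, 0 < X i ω j)
    (T : Ω → Ω) (hT : Ergodic T P)
    (hshift : ∀ i ω, X i (T ω) = X (i - 1) ω)
    -- the block `X_{i-ω}^{i-1}` viewed as a vector in Euclidean space `ℝ^{dω}`
    (block : ℤ → Ω → EuclideanSpace ℝ (Fin w × Fin d))
    (hblock : ∀ i ω p, block i ω p = X (i - w + (p.1 : ℤ)) ω p.2)
    (s : EuclideanSpace ℝ (Fin w × Fin d)) (c : ℝ) (hc : 0 < c)
    (hpos : 0 < P {ω | ‖block 0 ω - s‖ ^ 2 ≤ c}) :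
    ∀ f : (Fin d → ℝ) → ℝ, Continuous f → (∃ C, ∀ x, |f x| ≤ C) →
      ∀ᵐ ω ∂P,
        Tendsto (fun j : ℕ =>
            (∑ m ∈ (Finset.range (j - w)).filter
                (fun m : ℕ => ‖block (-(m : ℤ)) ω - s‖ ^ 2 ≤ c), f (X (-(m : ℤ)) ω))
              / ((Finset.range (j - w)).filter
                (fun m : ℕ => ‖block (-(m : ℤ)) ω - s‖ ^ 2 ≤ c)).card)
          atTop
          (nhds ((∫ ω' in {ω' | ‖block 0 ω' - s‖ ^ 2 ≤ c}, f (X 0 ω') ∂P)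
            / (P {ω' | ‖block 0 ω' - s‖ ^ 2 ≤ c}).toReal)) := by
  intro f hfc hfb
  obtain ⟨C, hC⟩ := hfb
  have hC0 : (0:ℝ) ≤ C := le_trans (abs_nonneg _) (hC fun _ => 0)
  have hTm : Measurable T := hT.toMeasurePreserving.measurable
  have hiter : ∀ (m : ℕ) (i : ℤ) (ω : Ω), X i (T^[m] ω) = X (i - m) ω := by
    intro m
    induction m with
    | zero => intro i ω; simp
    | succ m ih =>
      intro i ω
      rw [Function.iterate_succ_apply, ih i (T ω), hshift]
      congr 1
      push_cast
      ring
  have hblockmeas : Measurable (block 0) := by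
    refine (WithLp.measurable_toLp 2 _).comp (measurable_pi_lambda (fun ω => (block 0 ω).ofLp) ?_)
    intro p
    have h1 : (fun ω => block 0 ω p) = fun ω => X (0 - w + (p.1:ℤ)) ω p.2 := by
      funext ω; rw [hblock]
    rw [h1]
    exact (measurable_pi_apply p.2).comp (hXmeas _)
  set Aset : Set Ω := {ω' | ‖block 0 ω' - s‖ ^ 2 ≤ c} with hAset
  have hmeasnorm : Measurable fun ω => ‖block 0 ω - s‖ ^ 2 :=
    ((hblockmeas.sub measurable_const).norm).pow_const 2
  have hAmeas : MeasurableSet Aset := measurableSet_le hmeasnorm measurable_const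
  set G : Ω → ℝ := Set.indicator Aset (fun ω => f (X 0 ω)) with hG
  set H : Ω → ℝ := Set.indicator Aset (fun _ => (1:ℝ)) with hH
  have hGmeas : Measurable G := (hfc.measurable.comp (hXmeas 0)).indicator hAmeas
  have hHmeas : Measurable H := measurable_const.indicator hAmeas
  have hGC : ∀ ω, |G ω| ≤ C := by
    intro ω; rw [hG]; by_cases h : ω ∈ Aset
    · rw [Set.indicator_of_mem h]; exact hC _
    · rw [Set.indicator_of_notMem h]; simpa using hC0
  have hHC : ∀ ω, |H ω| ≤ 1 := by
    intro ω; rw [hH]; by_cases h : ω ∈ Aset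
    · rw [Set.indicator_of_mem h]; simp
    · rw [Set.indicator_of_notMem h]; simp
  have hBG := CornAux.birkhoff_bounded P hT hGmeas hGC
  have hBH := CornAux.birkhoff_bounded P hT hHmeas hHC
  have hIG : ∫ x, G x ∂P = ∫ ω' in Aset, f (X 0 ω') ∂P := integral_indicator hAmeas
  have hIH : ∫ x, H x ∂P = (P Aset).toReal := by
    rw [hH, integral_indicator hAmeas]
    simp
    rfl
  have hIHpos : 0 < (P Aset).toReal := ENNReal.toReal_pos hpos.ne' (measure_ne_top P _)
  filter_upwards [hBG, hBH] with ω hωG hωH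
  have hblockT : ∀ m : ℕ, block 0 (T^[m] ω) = block (-(m:ℤ)) ω := by
    intro m
    ext p
    rw [hblock, hblock, hiter]
    congr 1
    ring
  have hXT : ∀ m : ℕ, X 0 (T^[m] ω) = X (-(m:ℤ)) ω := by
    intro m
    rw [hiter]
    norm_num
  have hsum : ∀ n : ℕ, (∑ m ∈ (Finset.range n).filter
      (fun m : ℕ => ‖block (-(m : ℤ)) ω - s‖ ^ 2 ≤ c), f (X (-(m : ℤ)) ω))
      = CornAux.bS T G n ω := by
    intro n
    rw [Finset.sum_filter, CornAux.bS]
    refine Finset.sum_congr rfl fun m _ => ?_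
    rw [hG, Set.indicator_apply]
    refine (if_congr ?_ ?_ rfl).symm
    · simp only [hAset, Set.mem_setOf_eq, hblockT m]
    · rw [hXT m]
  have hcard : ∀ n : ℕ, ((((Finset.range n).filter
      (fun m : ℕ => ‖block (-(m : ℤ)) ω - s‖ ^ 2 ≤ c)).card : ℕ) : ℝ)
      = CornAux.bS T H n ω := by
    intro n
    rw [Finset.card_filter, CornAux.bS]
    push_cast
    refine Finset.sum_congr rfl fun m _ => ?_
    rw [hH, Set.indicator_apply]
    refine (if_congr ?_ rfl rfl).symm
    · simp only [hAset, Set.mem_setOf_eq, hblockT m]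
  rw [hIG] at hωG
  rw [hIH] at hωH
  have hratio := CornAux.ratio_tendsto hIHpos.ne' hωG hωH
  have hcomp := hratio.comp (tendsto_sub_atTop_nat w)
  refine hcomp.congr fun j => ?_
  show CornAux.bS T G (j - w) ω / CornAux.bS T H (j - w) ω = _
  rw [← hsum (j - w), ← hcard (j - w)]
end

section
/- Let Q_n (n in N union {infinity}) be probability distributions on the positive orthant R^d_+ such that E_{Q_n}[|log U^{(j)}|] < infinity for all coordinates j, and suppose Q_n -> Q_infinity weakly. Let b_n be a log-optimal portfolio for Q_n, i.e., b_n maximizes E_{Q_n}[log <b, U>] over the simplex Delta_d. Then for Q_infinity-almost every u, lim_{n -> infinity} <b_n, u> = <b*, u>, where the value <b*, u> is the same for every log-optimal portfolio b* of Q_infinity. -/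
open MeasureTheory Filter

section Basic
variable {d : ℕ}

lemma AC.sum_pos {b u : Fin d → ℝ} (hb : b ∈ stdSimplex ℝ (Fin d))
    (hu : ∀ j, 0 < u j) : 0 < ∑ j, b j * u j := by
  obtain ⟨j, hj⟩ : ∃ j, 0 < b j := by
    by_contra h
    push_neg at h
    have : ∑ j, b j = 0 := Finset.sum_eq_zero fun j _ => le_antisymm (h j) (hb.1 j)
    rw [hb.2] at this; norm_num at this
  refine Finset.sum_pos' (fun i _ => mul_nonneg (hb.1 i) (hu i).le) ⟨j, Finset.mem_univ j, mul_pos hj (hu j)⟩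

lemma AC.exists_inv_le {b : Fin d → ℝ} (hb : b ∈ stdSimplex ℝ (Fin d)) (hd : 0 < d) :
    ∃ j, (d : ℝ)⁻¹ ≤ b j := by
  have : Nonempty (Fin d) := Fin.pos_iff_nonempty.mp hd
  have hne : (Finset.univ : Finset (Fin d)).Nonempty := Finset.univ_nonempty
  obtain ⟨j, _, hj⟩ := Finset.exists_le_of_sum_le (f := fun _ : Fin d => (d : ℝ)⁻¹) (g := b) hne
    (by rw [hb.2]; simp [Finset.sum_const]
        rw [mul_inv_cancel₀]; positivity)
  exact ⟨j, hj⟩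

lemma AC.abs_log_sum_le {b u : Fin d → ℝ} (hb : b ∈ stdSimplex ℝ (Fin d))
    (hu : ∀ j, 0 < u j) (hd : 0 < d) :
    |Real.log (∑ j, b j * u j)| ≤ Real.log d + ∑ j, |Real.log (u j)| := by
  have hS : 0 < ∑ j, b j * u j := AC.sum_pos hb hu
  have hd1 : (1:ℝ) ≤ d := by exact_mod_cast hd
  have hlogd : 0 ≤ Real.log d := Real.log_nonneg hd1
  have habs : ∀ j, Real.log (u j) ≤ ∑ i, |Real.log (u i)| := by
    intro j
    calc Real.log (u j) ≤ |Real.log (u j)| := le_abs_self _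
    _ ≤ ∑ i, |Real.log (u i)| := Finset.single_le_sum (f := fun i => |Real.log (u i)|)
        (fun i _ => abs_nonneg _) (Finset.mem_univ j)
  rw [abs_le]
  constructor
  · -- lower bound
    obtain ⟨j, hj⟩ := AC.exists_inv_le hb hd
    have h1 : (d:ℝ)⁻¹ * u j ≤ ∑ i, b i * u i := by
      calc (d:ℝ)⁻¹ * u j ≤ b j * u j := by
            exact mul_le_mul_of_nonneg_right hj (hu j).le
      _ ≤ ∑ i, b i * u i := Finset.single_le_sum (f := fun i => b i * u i)
            (fun i _ => mul_nonneg (hb.1 i) (hu i).le) (Finset.mem_univ j)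
    have hdpos : (0:ℝ) < (d:ℝ)⁻¹ * u j := by
      have h0 : (0:ℝ) < d := by exact_mod_cast hd
      exact mul_pos (inv_pos.mpr h0) (hu j)
    have := Real.log_le_log hdpos h1
    rw [Real.log_mul (by
      have : (0:ℝ) < d := by exact_mod_cast hd
      positivity) (hu j).ne', Real.log_inv] at this
    have h2 : -(∑ i, |Real.log (u i)|) ≤ Real.log (u j) := by
      have : |Real.log (u j)| ≤ ∑ i, |Real.log (u i)| := Finset.single_le_sum
        (f := fun i => |Real.log (u i)|) (fun i _ => abs_nonneg _) (Finset.mem_univ j)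
      linarith [neg_abs_le (Real.log (u j))]
    linarith
  · -- upper bound
    have hmax : ∃ j, ∀ i, u i ≤ u j := by
      obtain ⟨j, _, hj⟩ := (Finset.univ.exists_max_image u
        (by have : Nonempty (Fin d) := Fin.pos_iff_nonempty.mp hd; exact Finset.univ_nonempty))
      exact ⟨j, fun i => hj i (Finset.mem_univ i)⟩
    obtain ⟨j, hj⟩ := hmax
    have h1 : ∑ i, b i * u i ≤ d * u j := by
      calc ∑ i, b i * u i ≤ ∑ i, u i := by
            refine Finset.sum_le_sum fun i _ => ?_
            have : b i ≤ 1 := by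
              rw [← hb.2]
              exact Finset.single_le_sum (f := b) (fun k _ => hb.1 k) (Finset.mem_univ i)
            nlinarith [(hu i).le]
      _ ≤ ∑ _i : Fin d, u j := Finset.sum_le_sum fun i _ => hj i
      _ = d * u j := by simp [Finset.sum_const, mul_comm]
    have := Real.log_le_log hS h1
    rw [Real.log_mul (by
      have : (0:ℝ) < d := by exact_mod_cast hd
      positivity) (hu j).ne'] at this
    linarith [habs j]

end Basic

section Meas
variable {d : ℕ} {P : Measure (Fin d → ℝ)} [IsProbabilityMeasure P]

lemma AC.measurableSet_orthant : MeasurableSet {u : Fin d → ℝ | ∀ j, 0 < u j} := by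
  have : {u : Fin d → ℝ | ∀ j, 0 < u j} = ⋂ j, {u | 0 < u j} := by
    ext u; simp [Set.mem_iInter]
  rw [this]
  exact MeasurableSet.iInter fun j => measurableSet_lt measurable_const (measurable_pi_apply j)

lemma AC.ae_orthant (hP : P {u : Fin d → ℝ | ∀ j, 0 < u j} = 1) :
    ∀ᵐ u ∂P, ∀ j, 0 < u j := by
  have := (prob_compl_eq_zero_iff (μ := P) AC.measurableSet_orthant).mpr hP
  exact MeasureTheory.mem_ae_iff.mpr (by simpa using this)

lemma AC.measurable_logsum (b : Fin d → ℝ) :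
    Measurable fun u : Fin d → ℝ => Real.log (∑ j, b j * u j) :=
  Real.measurable_log.comp (by
    exact Finset.measurable_sum _ fun j _ => measurable_const.mul (measurable_pi_apply j))

lemma AC.integrable_logsum {b : Fin d → ℝ} (hb : b ∈ stdSimplex ℝ (Fin d)) (hd : 0 < d)
    (hP : P {u : Fin d → ℝ | ∀ j, 0 < u j} = 1)
    (hint : ∀ j, Integrable (fun u : Fin d → ℝ => |Real.log (u j)|) P) :
    Integrable (fun u : Fin d → ℝ => Real.log (∑ j, b j * u j)) P := by
  have hdom : Integrable (fun u : Fin d → ℝ => Real.log d + ∑ j, |Real.log (u j)|) P :=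
    (integrable_const _).add (integrable_finset_sum _ fun j _ => hint j)
  refine Integrable.mono' hdom ((AC.measurable_logsum b).aestronglyMeasurable) ?_
  filter_upwards [AC.ae_orthant hP] with u hu
  rw [Real.norm_eq_abs]
  exact AC.abs_log_sum_le hb hu hd

end Meas

section Key
variable {d : ℕ}

-- linearity of the return in the portfolio
lemma AC.mlog_bound {m : ℕ} (hm : 2 ≤ m) : (-2 : ℝ) ≤ (m:ℝ) * Real.log (1 - 1/(m:ℝ)) := by
  have hm' : (2:ℝ) ≤ m := by exact_mod_cast hm
  have h0 : (0:ℝ) < m := by linarith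
  have h1 : (0:ℝ) < 1 - 1/(m:ℝ) := by
    rw [sub_pos, div_lt_one h0]; linarith
  -- log(1 - 1/m) ≥ -2/m  ⟺  exp(-2/m) ≤ 1 - 1/m
  have hexp : Real.exp (-(2/(m:ℝ))) ≤ 1 - 1/(m:ℝ) := by
    have h2 : (1:ℝ) + 2/(m:ℝ) ≤ Real.exp (2/(m:ℝ)) := by
      have := Real.add_one_le_exp (2/(m:ℝ)); linarith
    have h3 : (0:ℝ) < 1 + 2/(m:ℝ) := by positivity
    rw [Real.exp_neg]
    have h4 : (Real.exp (2/(m:ℝ)))⁻¹ ≤ (1 + 2/(m:ℝ))⁻¹ :=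
      inv_anti₀ h3 h2
    refine h4.trans ?_
    have ht : 1/(m:ℝ) ≤ 1/2 := by
      rw [div_le_div_iff₀ h0 (by norm_num)]; linarith
    rw [inv_eq_one_div, div_le_iff₀ h3]
    have h5 : (0:ℝ) < 1/(m:ℝ) := by positivity
    have h6 : (0:ℝ) ≤ (1/(m:ℝ)) * (1 - 2*(1/(m:ℝ))) :=
      mul_nonneg h5.le (by linarith)
    have h7 : 2/(m:ℝ) = 2*(1/(m:ℝ)) := by ring
    rw [h7]
    nlinarith [h6]
  have := Real.log_le_log (Real.exp_pos _) hexp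
  rw [Real.log_exp] at this
  have : -(2/(m:ℝ)) ≤ Real.log (1 - 1/(m:ℝ)) := this
  calc (-2:ℝ) = (m:ℝ) * (-(2/(m:ℝ))) := by field_simp
  _ ≤ (m:ℝ) * Real.log (1 - 1/(m:ℝ)) := by
      exact mul_le_mul_of_nonneg_left this (by linarith)

end Key

section Key
variable {d : ℕ}

lemma AC.sum_comb (a a' : ℝ) (x y u : Fin d → ℝ) :
    ∑ j, (a • x + a' • y) j * u j = a * ∑ j, x j * u j + a' * ∑ j, y j * u j := by
  simp only [Pi.add_apply, Pi.smul_apply, smul_eq_mul, add_mul, Finset.sum_add_distrib,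
    Finset.mul_sum, mul_assoc]

lemma AC.key_pointwise {m : ℕ} {b c u : Fin d → ℝ} (hb : b ∈ stdSimplex ℝ (Fin d))
    (hc : c ∈ stdSimplex ℝ (Fin d)) (hu : ∀ j, 0 < u j) :
    ((m:ℝ)+2) * (Real.log (∑ j, ((1 - 1/((m:ℝ)+2)) • b + (1/((m:ℝ)+2)) • c) j * u j)
        - Real.log (∑ j, b j * u j))
      = ((m:ℝ)+2) * Real.log (1 + ((∑ j, c j * u j) / (∑ j, b j * u j) - 1)/((m:ℝ)+2)) := by
  have hm : (0:ℝ) < (m:ℝ)+2 := by positivity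
  have hx : 0 < ∑ j, b j * u j := AC.sum_pos hb hu
  have hy : 0 ≤ ∑ j, c j * u j :=
    Finset.sum_nonneg fun j _ => mul_nonneg (hc.1 j) (hu j).le
  set x := ∑ j, b j * u j
  set y := ∑ j, c j * u j
  have hcomb : ∑ j, ((1 - 1/((m:ℝ)+2)) • b + (1/((m:ℝ)+2)) • c) j * u j
      = (1 - 1/((m:ℝ)+2)) * x + (1/((m:ℝ)+2)) * y := AC.sum_comb _ _ _ _ _
  rw [hcomb]
  congr 1
  have harg : (1 - 1/((m:ℝ)+2)) * x + (1/((m:ℝ)+2)) * y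
      = x * (1 + (y/x - 1)/((m:ℝ)+2)) := by
    field_simp
    ring
  rw [harg, Real.log_mul hx.ne' ?hne]
  · ring
  case hne =>
    have hyx : 0 ≤ y/x := div_nonneg hy hx.le
    have h2 : (-1:ℝ) < (y/x - 1)/((m:ℝ)+2) := by
      rw [lt_div_iff₀ hm]; nlinarith
    have h1 : (0:ℝ) < 1 + (y/x - 1)/((m:ℝ)+2) := by linarith
    exact h1.ne'

end Key
lemma AC.lintegral_ratio_le_one {d : ℕ} {P : Measure (Fin d → ℝ)} [IsProbabilityMeasure P]
    (hd : 0 < d) (hP : P {u : Fin d → ℝ | ∀ j, 0 < u j} = 1)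
    (hint : ∀ j, Integrable (fun u : Fin d → ℝ => |Real.log (u j)|) P)
    {b : Fin d → ℝ} (hb : b ∈ stdSimplex ℝ (Fin d))
    (hopt : ∀ c ∈ stdSimplex ℝ (Fin d),
      ∫ u, Real.log (∑ j, c j * u j) ∂P ≤ ∫ u, Real.log (∑ j, b j * u j) ∂P)
    {c : Fin d → ℝ} (hc : c ∈ stdSimplex ℝ (Fin d)) :
    ∫⁻ u, ENNReal.ofReal ((∑ j, c j * u j) / (∑ j, b j * u j)) ∂P ≤ 1 := by
  have hae := AC.ae_orthant hP
  set bm : ℕ → Fin d → ℝ := fun m => (1 - 1/((m:ℝ)+2)) • b + (1/((m:ℝ)+2)) • c with hbmdef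
  have hlam : ∀ m : ℕ, 0 < 1/((m:ℝ)+2) ∧ 1/((m:ℝ)+2) < 1 := by
    intro m
    refine ⟨by positivity, ?_⟩
    rw [div_lt_one (by positivity)]; have : (0:ℝ) ≤ m := Nat.cast_nonneg m; linarith
  have hbm : ∀ m, bm m ∈ stdSimplex ℝ (Fin d) := by
    intro m
    exact (convex_stdSimplex ℝ (Fin d)) hb hc (by linarith [(hlam m).2])
      (le_of_lt (hlam m).1) (by ring)
  set G : ℕ → (Fin d → ℝ) → ℝ := fun m u =>
    ((m:ℝ)+2) * (Real.log (∑ j, bm m j * u j) - Real.log (∑ j, b j * u j)) with hGdef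
  have hGmeas : ∀ m, Measurable (G m) := fun m =>
    ((AC.measurable_logsum (bm m)).sub (AC.measurable_logsum b)).const_mul _
  have hGint : ∀ m, Integrable (G m) P := fun m =>
    ((AC.integrable_logsum (hbm m) hd hP hint).sub
      (AC.integrable_logsum hb hd hP hint)).const_mul _
  have hGle : ∀ m, ∫ u, G m u ∂P ≤ 0 := by
    intro m
    have h1 : ∫ u, G m u ∂P = ((m:ℝ)+2) * ((∫ u, Real.log (∑ j, bm m j * u j) ∂P)
        - ∫ u, Real.log (∑ j, b j * u j) ∂P) := by
      rw [hGdef, MeasureTheory.integral_const_mul]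
      congr 1
      exact integral_sub (AC.integrable_logsum (hbm m) hd hP hint)
        (AC.integrable_logsum hb hd hP hint)
    rw [h1]
    have := hopt (bm m) (hbm m)
    apply mul_nonpos_of_nonneg_of_nonpos (by positivity)
    linarith
  have hptid : ∀ᵐ u ∂P, ∀ m : ℕ,
      G m u = ((m:ℝ)+2) * Real.log (1 + ((∑ j, c j * u j) / (∑ j, b j * u j) - 1)/((m:ℝ)+2)) := by
    filter_upwards [hae] with u hu m
    exact AC.key_pointwise hb hc hu
  have hG2 : ∀ᵐ u ∂P, ∀ m : ℕ, 0 ≤ G m u + 2 := by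
    filter_upwards [hptid, hae] with u hid hu m
    rw [hid m]
    have hx := AC.sum_pos hb hu
    have hy : 0 ≤ ∑ j, c j * u j :=
      Finset.sum_nonneg fun j _ => mul_nonneg (hc.1 j) (hu j).le
    have hr : 0 ≤ (∑ j, c j * u j) / (∑ j, b j * u j) := div_nonneg hy hx.le
    have h0 : (0:ℝ) < (m:ℝ)+2 := by positivity
    have hlb : 1 - 1/((m:ℝ)+2) ≤ 1 + ((∑ j, c j * u j) / (∑ j, b j * u j) - 1)/((m:ℝ)+2) := by
      rw [sub_eq_add_neg, ← neg_div]
      gcongr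
      linarith
    have hlog := Real.log_le_log (by linarith [(hlam m).2, (hlam m).1] : (0:ℝ) < 1 - 1/((m:ℝ)+2)) hlb
    have hmb := AC.mlog_bound (m := m + 2) (by omega)
    push_cast at hmb
    have h2 : ((m:ℝ)+2) * Real.log (1 - 1/((m:ℝ)+2))
        ≤ ((m:ℝ)+2) * Real.log (1 + ((∑ j, c j * u j) / (∑ j, b j * u j) - 1)/((m:ℝ)+2)) :=
      mul_le_mul_of_nonneg_left hlog h0.le
    linarith
  have hofm : ∀ m, ∫⁻ u, ENNReal.ofReal (G m u + 2) ∂P ≤ 2 := by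
    intro m
    rw [← ofReal_integral_eq_lintegral_ofReal (f := fun u => G m u + 2)
      ((hGint m).add (integrable_const 2))
      (hG2.mono fun u h => h m)]
    have h1 : ∫ u, (G m u + 2) ∂P = (∫ u, G m u ∂P) + 2 := by
      rw [integral_add (hGint m) (integrable_const _), integral_const]
      simp
    rw [h1]
    calc ENNReal.ofReal ((∫ u, G m u ∂P) + 2) ≤ ENNReal.ofReal 2 :=
          ENNReal.ofReal_le_ofReal (by linarith [hGle m])
    _ = 2 := by norm_num
  have hFatou := lintegral_liminf_le (μ := P) (u := (atTop : Filter ℕ))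
    (f := fun m u => ENNReal.ofReal (G m u + 2))
    (fun m => ((hGmeas m).add_const 2).ennreal_ofReal)
  have hlim : ∀ᵐ u ∂P, Filter.liminf (fun m => ENNReal.ofReal (G m u + 2)) atTop
      = ENNReal.ofReal ((∑ j, c j * u j) / (∑ j, b j * u j) + 1) := by
    filter_upwards [hptid] with u hid
    have h1 : Tendsto (fun x : ℝ => x * Real.log (1 + ((∑ j, c j * u j) / (∑ j, b j * u j) - 1) / x))
        atTop (nhds ((∑ j, c j * u j) / (∑ j, b j * u j) - 1)) :=
      Real.tendsto_mul_log_one_add_of_tendsto (tendsto_const_nhds.congr' (by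
        filter_upwards [eventually_ne_atTop 0] with x hx
        field_simp))
    have h2 : Tendsto (fun m:ℕ => (m:ℝ)+2) atTop atTop :=
      tendsto_atTop_add_const_right _ _ tendsto_natCast_atTop_atTop
    have h3 := h1.comp h2
    have htend0 : Tendsto (fun m:ℕ => G m u) atTop
        (nhds ((∑ j, c j * u j) / (∑ j, b j * u j) - 1)) := by
      refine h3.congr fun m => ?_
      simp only [Function.comp_apply]
      exact (hid m).symm
    have htend : Tendsto (fun m:ℕ => ENNReal.ofReal (G m u + 2)) atTop
        (nhds (ENNReal.ofReal ((∑ j, c j * u j) / (∑ j, b j * u j) + 1))) := by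
      have h4 : Tendsto (fun m:ℕ => G m u + 2) atTop
          (nhds ((∑ j, c j * u j) / (∑ j, b j * u j) + 1)) := by
        have := htend0.add_const 2
        convert this using 2
        ring
      exact (ENNReal.continuous_ofReal.tendsto _).comp h4
    exact htend.liminf_eq
  have key : ∫⁻ u, ENNReal.ofReal ((∑ j, c j * u j) / (∑ j, b j * u j) + 1) ∂P ≤ 2 := by
    calc ∫⁻ u, ENNReal.ofReal ((∑ j, c j * u j) / (∑ j, b j * u j) + 1) ∂P
        = ∫⁻ u, Filter.liminf (fun m => ENNReal.ofReal (G m u + 2)) atTop ∂P :=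
          lintegral_congr_ae (hlim.mono fun u h => h.symm)
    _ ≤ Filter.liminf (fun m => ∫⁻ u, ENNReal.ofReal (G m u + 2) ∂P) atTop := hFatou
    _ ≤ Filter.liminf (fun _ : ℕ => (2:ENNReal)) atTop :=
          Filter.liminf_le_liminf (Filter.Eventually.of_forall hofm)
    _ = 2 := Filter.liminf_const _
  have hsplit : ∀ᵐ u ∂P, ENNReal.ofReal ((∑ j, c j * u j) / (∑ j, b j * u j) + 1)
      = ENNReal.ofReal ((∑ j, c j * u j) / (∑ j, b j * u j)) + 1 := by
    filter_upwards [hae] with u hu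
    have hx := AC.sum_pos hb hu
    have hy : 0 ≤ ∑ j, c j * u j :=
      Finset.sum_nonneg fun j _ => mul_nonneg (hc.1 j) (hu j).le
    rw [ENNReal.ofReal_add (div_nonneg hy hx.le) zero_le_one, ENNReal.ofReal_one]
  rw [lintegral_congr_ae hsplit, lintegral_add_right _ measurable_const] at key
  simp only [lintegral_one, measure_univ, mul_one] at key
  rwa [show (2:ENNReal) = 1 + 1 by norm_num,
    ENNReal.add_le_add_iff_right ENNReal.one_ne_top] at key
lemma AC.opt_of_ratio {d : ℕ} {P : Measure (Fin d → ℝ)} [IsProbabilityMeasure P]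
    (hd : 0 < d) (hP : P {u : Fin d → ℝ | ∀ j, 0 < u j} = 1)
    (hint : ∀ j, Integrable (fun u : Fin d → ℝ => |Real.log (u j)|) P)
    {b : Fin d → ℝ} (hb : b ∈ stdSimplex ℝ (Fin d))
    (hratio : ∀ c ∈ stdSimplex ℝ (Fin d),
      ∫⁻ u, ENNReal.ofReal ((∑ j, c j * u j) / (∑ j, b j * u j)) ∂P ≤ 1) :
    ∀ c ∈ stdSimplex ℝ (Fin d),
      ∫ u, Real.log (∑ j, c j * u j) ∂P ≤ ∫ u, Real.log (∑ j, b j * u j) ∂P := by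
  intro c hc
  have hae := AC.ae_orthant hP
  set r : (Fin d → ℝ) → ℝ := fun u => (∑ j, c j * u j) / (∑ j, b j * u j) with hrdef
  have hmsum : ∀ e : Fin d → ℝ, Measurable fun u : Fin d → ℝ => ∑ j, e j * u j := by
    intro e
    exact Finset.measurable_sum _ fun j _ => measurable_const.mul (measurable_pi_apply j)
  have hrmeas : Measurable r := (hmsum c).div (hmsum b)
  have hrnn : ∀ᵐ u ∂P, 0 ≤ r u := by
    filter_upwards [hae] with u hu
    exact div_nonneg (Finset.sum_nonneg fun j _ => mul_nonneg (hc.1 j) (hu j).le)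
      (AC.sum_pos hb hu).le
  have hrint : Integrable r P := by
    refine ⟨hrmeas.aestronglyMeasurable, ?_⟩
    rw [hasFiniteIntegral_iff_norm]
    have : ∫⁻ u, ENNReal.ofReal ‖r u‖ ∂P = ∫⁻ u, ENNReal.ofReal (r u) ∂P := by
      refine lintegral_congr_ae ?_
      filter_upwards [hrnn] with u hu
      rw [Real.norm_eq_abs, abs_of_nonneg hu]
    rw [this]
    exact lt_of_le_of_lt (hratio c hc) (by norm_num)
  have hrle : ∫ u, r u ∂P ≤ 1 := by
    rw [integral_eq_lintegral_of_nonneg_ae hrnn hrmeas.aestronglyMeasurable]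
    refine ENNReal.toReal_le_of_le_ofReal zero_le_one ?_
    simpa using hratio c hc
  have hpt : ∀ᵐ u ∂P, Real.log (∑ j, c j * u j)
      ≤ Real.log (∑ j, b j * u j) + (r u - 1) := by
    filter_upwards [hae] with u hu
    have hx := AC.sum_pos hb hu
    have hy := AC.sum_pos hc hu
    have hlog : Real.log (r u) ≤ r u - 1 :=
      Real.log_le_sub_one_of_pos (div_pos hy hx)
    rw [hrdef] at hlog ⊢
    rw [Real.log_div hy.ne' hx.ne'] at hlog
    simp only at hlog ⊢
    linarith
  have hint1 := AC.integrable_logsum hc hd hP hint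
  have hintb := AC.integrable_logsum hb hd hP hint
  have hint3 : Integrable (fun u => r u - 1) P := hrint.sub (integrable_const 1)
  have hint2 : Integrable (fun u => Real.log (∑ j, b j * u j) + (r u - 1)) P :=
    hintb.add hint3
  have := integral_mono_ae hint1 hint2 hpt
  rw [integral_add hintb hint3, integral_sub hrint (integrable_const 1),
    integral_const] at this
  simp only [measure_univ, ENNReal.toReal_one, probReal_univ, smul_eq_mul, one_mul] at this
  linarith

set_option maxHeartbeats 1000000 in
lemma AC.unique_ae {d : ℕ} {P : Measure (Fin d → ℝ)} [IsProbabilityMeasure P]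
    (hd : 0 < d) (hP : P {u : Fin d → ℝ | ∀ j, 0 < u j} = 1)
    (hint : ∀ j, Integrable (fun u : Fin d → ℝ => |Real.log (u j)|) P)
    {b b' : Fin d → ℝ} (hb : b ∈ stdSimplex ℝ (Fin d)) (hb' : b' ∈ stdSimplex ℝ (Fin d))
    (hoptb : ∀ c ∈ stdSimplex ℝ (Fin d),
      ∫ u, Real.log (∑ j, c j * u j) ∂P ≤ ∫ u, Real.log (∑ j, b j * u j) ∂P)
    (hoptb' : ∀ c ∈ stdSimplex ℝ (Fin d),
      ∫ u, Real.log (∑ j, c j * u j) ∂P ≤ ∫ u, Real.log (∑ j, b' j * u j) ∂P) :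
    ∀ᵐ u ∂P, ∑ j, b j * u j = ∑ j, b' j * u j := by
  have hae := AC.ae_orthant hP
  set mid : Fin d → ℝ := (1/2:ℝ) • b + (1/2:ℝ) • b' with hmiddef
  have hmid : mid ∈ stdSimplex ℝ (Fin d) :=
    (convex_stdSimplex ℝ (Fin d)) hb hb' (by norm_num) (by norm_num) (by norm_num)
  have hWeq : ∫ u, Real.log (∑ j, b j * u j) ∂P = ∫ u, Real.log (∑ j, b' j * u j) ∂P :=
    le_antisymm (hoptb' b hb) (hoptb b' hb')
  set h : (Fin d → ℝ) → ℝ := fun u => Real.log (∑ j, mid j * u j)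
    - (Real.log (∑ j, b j * u j) + Real.log (∑ j, b' j * u j))/2 with hhdef
  have hcomb : ∀ u : Fin d → ℝ, ∑ j, mid j * u j
      = (1/2) * (∑ j, b j * u j) + (1/2) * (∑ j, b' j * u j) := fun u => AC.sum_comb _ _ _ _ _
  have hhnn : ∀ᵐ u ∂P, 0 ≤ h u := by
    filter_upwards [hae] with u hu
    have hx := AC.sum_pos hb hu
    have hy := AC.sum_pos hb' hu
    have hconc := strictConcaveOn_log_Ioi.concaveOn.2 (Set.mem_Ioi.mpr hx)
      (Set.mem_Ioi.mpr hy) (by norm_num : (0:ℝ) ≤ 1/2) (by norm_num : (0:ℝ) ≤ 1/2)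
      (by norm_num)
    simp only [smul_eq_mul] at hconc
    simp only [hhdef]
    rw [hcomb u]
    linarith
  have hintmid := AC.integrable_logsum hmid hd hP hint
  have hintb := AC.integrable_logsum hb hd hP hint
  have hintb' := AC.integrable_logsum hb' hd hP hint
  have hintsum : Integrable (fun u => Real.log (∑ j, b j * u j)
      + Real.log (∑ j, b' j * u j)) P := hintb.add hintb'
  have hintsum2 : Integrable (fun u => (Real.log (∑ j, b j * u j)
      + Real.log (∑ j, b' j * u j))/2) P := hintsum.div_const 2
  have hhint : Integrable h P := hintmid.sub hintsum2
  have hhle : ∫ u, h u ∂P ≤ 0 := by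
    have h1 : ∫ u, h u ∂P = (∫ u, Real.log (∑ j, mid j * u j) ∂P)
        - ∫ u, (Real.log (∑ j, b j * u j) + Real.log (∑ j, b' j * u j))/2 ∂P :=
      integral_sub hintmid hintsum2
    have h2 : ∫ u, (Real.log (∑ j, b j * u j) + Real.log (∑ j, b' j * u j))/2 ∂P
        = (∫ u, (Real.log (∑ j, b j * u j) + Real.log (∑ j, b' j * u j)) ∂P)/2 :=
      integral_div (2:ℝ) _
    have h3 : ∫ u, (Real.log (∑ j, b j * u j) + Real.log (∑ j, b' j * u j)) ∂P
        = (∫ u, Real.log (∑ j, b j * u j) ∂P) + ∫ u, Real.log (∑ j, b' j * u j) ∂P :=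
      integral_add hintb hintb'
    have h4 := hoptb mid hmid
    rw [h1, h2, h3]
    linarith [hWeq]
  have hzero : h =ᶠ[ae P] 0 := by
    rw [← integral_eq_zero_iff_of_nonneg_ae hhnn hhint]
    exact le_antisymm hhle (integral_nonneg_of_ae hhnn)
  filter_upwards [hzero, hae] with u hu0 hu
  by_contra hne
  have hx := AC.sum_pos hb hu
  have hy := AC.sum_pos hb' hu
  have hstrict := strictConcaveOn_log_Ioi.2 (Set.mem_Ioi.mpr hx) (Set.mem_Ioi.mpr hy)
    hne (by norm_num : (0:ℝ) < 1/2) (by norm_num : (0:ℝ) < 1/2) (by norm_num)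
  simp only [smul_eq_mul] at hstrict
  have : h u = 0 := hu0
  simp only [hhdef] at this
  rw [hcomb u] at this
  linarith
lemma AC.ratio_int {d : ℕ} {P : Measure (Fin d → ℝ)} [IsProbabilityMeasure P]
    (hP : P {u : Fin d → ℝ | ∀ j, 0 < u j} = 1)
    {b c : Fin d → ℝ} (hb : b ∈ stdSimplex ℝ (Fin d)) (hc : c ∈ stdSimplex ℝ (Fin d))
    (h1 : ∫⁻ u, ENNReal.ofReal ((∑ j, c j * u j) / (∑ j, b j * u j)) ∂P ≤ 1) :
    Integrable (fun u => (∑ j, c j * u j) / (∑ j, b j * u j)) P ∧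
      ∫ u, (∑ j, c j * u j) / (∑ j, b j * u j) ∂P ≤ 1 := by
  have hae := AC.ae_orthant hP
  have hmsum : ∀ e : Fin d → ℝ, Measurable fun u : Fin d → ℝ => ∑ j, e j * u j := by
    intro e
    exact Finset.measurable_sum _ fun j _ => measurable_const.mul (measurable_pi_apply j)
  have hrmeas : Measurable fun u : Fin d → ℝ => (∑ j, c j * u j) / (∑ j, b j * u j) :=
    (hmsum c).div (hmsum b)
  have hrnn : ∀ᵐ u ∂P, 0 ≤ (∑ j, c j * u j) / (∑ j, b j * u j) := by
    filter_upwards [hae] with u hu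
    exact div_nonneg (Finset.sum_nonneg fun j _ => mul_nonneg (hc.1 j) (hu j).le)
      (AC.sum_pos hb hu).le
  have hrint : Integrable (fun u => (∑ j, c j * u j) / (∑ j, b j * u j)) P := by
    refine ⟨hrmeas.aestronglyMeasurable, ?_⟩
    rw [hasFiniteIntegral_iff_norm]
    have heq : ∫⁻ u, ENNReal.ofReal ‖(∑ j, c j * u j) / (∑ j, b j * u j)‖ ∂P
        = ∫⁻ u, ENNReal.ofReal ((∑ j, c j * u j) / (∑ j, b j * u j)) ∂P := by
      refine lintegral_congr_ae ?_
      filter_upwards [hrnn] with u hu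
      rw [Real.norm_eq_abs, abs_of_nonneg hu]
    rw [heq]
    exact lt_of_le_of_lt h1 (by norm_num)
  refine ⟨hrint, ?_⟩
  rw [integral_eq_lintegral_of_nonneg_ae hrnn hrmeas.aestronglyMeasurable]
  refine ENNReal.toReal_le_of_le_ofReal zero_le_one ?_
  simpa using h1

lemma AC.limit_ratio {d : ℕ} (hd : 0 < d)
    {Qs : ℕ → ProbabilityMeasure (Fin d → ℝ)} {P : ProbabilityMeasure (Fin d → ℝ)}
    (hQs : Tendsto Qs atTop (nhds P))
    (hsupp : ∀ n, (Qs n : Measure (Fin d → ℝ)) {u | ∀ j, 0 < u j} = 1)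
    (hP : (P : Measure (Fin d → ℝ)) {u | ∀ j, 0 < u j} = 1)
    {bs : ℕ → Fin d → ℝ} (hbs : ∀ n, bs n ∈ stdSimplex ℝ (Fin d))
    {b : Fin d → ℝ} (hb : b ∈ stdSimplex ℝ (Fin d))
    (hblim : Tendsto bs atTop (nhds b))
    {c : Fin d → ℝ} (hc : c ∈ stdSimplex ℝ (Fin d))
    (hineq : ∀ n, ∫⁻ u, ENNReal.ofReal ((∑ j, c j * u j) / (∑ j, bs n j * u j))
      ∂(Qs n : Measure (Fin d → ℝ)) ≤ 1) :
    ∫⁻ u, ENNReal.ofReal ((∑ j, c j * u j) / (∑ j, b j * u j))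
      ∂(P : Measure (Fin d → ℝ)) ≤ 1 := by
  classical
  set N : (Fin d → ℝ) → ℝ := fun u => ∑ j, c j * max (u j) 0 with hNdef
  set D : (Fin d → ℝ) → ℝ := fun u => ∑ j, b j * max (u j) 0 with hDdef
  set T : (Fin d → ℝ) → ℝ := fun u => ∑ j, max (u j) 0 with hTdef
  have hNcont : Continuous N :=
    continuous_finset_sum _ fun j _ => continuous_const.mul ((continuous_apply j).max continuous_const)
  have hDcont : Continuous D :=
    continuous_finset_sum _ fun j _ => continuous_const.mul ((continuous_apply j).max continuous_const)
  have hTcont : Continuous T :=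
    continuous_finset_sum _ fun j _ => (continuous_apply j).max continuous_const
  have hNnn : ∀ u, 0 ≤ N u := fun u =>
    Finset.sum_nonneg fun j _ => mul_nonneg (hc.1 j) (le_max_right _ _)
  have hDnn : ∀ u, 0 ≤ D u := fun u =>
    Finset.sum_nonneg fun j _ => mul_nonneg (hb.1 j) (le_max_right _ _)
  have hTnn : ∀ u, 0 ≤ T u := fun u => Finset.sum_nonneg fun j _ => le_max_right _ _
  set g : ℕ → (Fin d → ℝ) → ℝ := fun m u =>
    min (N u / (D u + (1/((m:ℝ)+1)) * (T u + 1))) m with hgdef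
  have hdenpos : ∀ m : ℕ, ∀ u, 0 < D u + (1/((m:ℝ)+1)) * (T u + 1) := by
    intro m u
    have h1 : (0:ℝ) < 1/((m:ℝ)+1) := by positivity
    nlinarith [hDnn u, hTnn u]
  have hgnn : ∀ m : ℕ, ∀ u, 0 ≤ g m u := by
    intro m u
    exact le_min (div_nonneg (hNnn u) (hdenpos m u).le) (Nat.cast_nonneg m)
  have hgle : ∀ m : ℕ, ∀ u, g m u ≤ m := fun m u => min_le_right _ _
  have hgcont : ∀ m : ℕ, Continuous (g m) := by
    intro m
    refine Continuous.min ?_ continuous_const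
    exact hNcont.div (hDcont.add (continuous_const.mul (hTcont.add continuous_const)))
      fun u => (hdenpos m u).ne'
  set G : ℕ → BoundedContinuousFunction (Fin d → ℝ) ℝ := fun m =>
    BoundedContinuousFunction.ofNormedAddCommGroup (g m) (hgcont m) m
      (fun u => by
        rw [Real.norm_eq_abs, abs_of_nonneg (hgnn m u)]
        exact hgle m u) with hGdef
  -- Step A : ∫ g m dP ≤ 1
  have hstepA : ∀ m : ℕ, ∫ u, g m u ∂(P : Measure (Fin d → ℝ)) ≤ 1 := by
    intro m
    have htendint := MeasureTheory.ProbabilityMeasure.tendsto_iff_forall_integral_tendsto.mp hQs (G m)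
    refine le_of_tendsto htendint ?_
    have hev : ∀ᶠ n in atTop, ∀ j, bs n j < b j + 1/((m:ℝ)+1) := by
      rw [eventually_all]
      intro j
      refine Tendsto.eventually_lt_const ?_ (tendsto_pi_nhds.mp hblim j)
      have : (0:ℝ) < 1/((m:ℝ)+1) := by positivity
      linarith
    filter_upwards [hev] with n hn
    -- ∫ G m d(Qs n) ≤ 1
    have haen := AC.ae_orthant (P := (Qs n : Measure (Fin d → ℝ))) (hsupp n)
    have hri := AC.ratio_int (P := (Qs n : Measure (Fin d → ℝ))) (hsupp n) (hbs n) hc (hineq n)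
    have hgint : Integrable (g m) (Qs n : Measure (Fin d → ℝ)) :=
      (G m).integrable _
    have hmono : ∀ᵐ u ∂(Qs n : Measure (Fin d → ℝ)),
        g m u ≤ (∑ j, c j * u j) / (∑ j, bs n j * u j) := by
      filter_upwards [haen] with u hu
      have hmax : ∀ j, max (u j) 0 = u j := fun j => max_eq_left (hu j).le
      have hSn : 0 < ∑ j, bs n j * u j := AC.sum_pos (hbs n) hu
      have hNu : N u = ∑ j, c j * u j := by
        rw [hNdef]; exact Finset.sum_congr rfl fun j _ => by rw [hmax j]
      have hDu : D u = ∑ j, b j * u j := by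
        rw [hDdef]; exact Finset.sum_congr rfl fun j _ => by rw [hmax j]
      have hTu : T u = ∑ j, u j := by
        rw [hTdef]; exact Finset.sum_congr rfl fun j _ => hmax j
      have hle : ∑ j, bs n j * u j ≤ D u + (1/((m:ℝ)+1)) * (T u + 1) := by
        rw [hDu, hTu]
        have h1 : ∑ j, bs n j * u j ≤ ∑ j, (b j + 1/((m:ℝ)+1)) * u j := by
          refine Finset.sum_le_sum fun j _ => ?_
          exact mul_le_mul_of_nonneg_right (hn j).le (hu j).le
        have h2 : ∑ j, (b j + 1/((m:ℝ)+1)) * u j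
            = (∑ j, b j * u j) + (1/((m:ℝ)+1)) * ∑ j, u j := by
          simp only [add_mul, Finset.sum_add_distrib, Finset.mul_sum]
        have h3 : (0:ℝ) < 1/((m:ℝ)+1) := by positivity
        nlinarith [h1, h2]
      calc g m u ≤ N u / (D u + (1/((m:ℝ)+1)) * (T u + 1)) := min_le_left _ _
      _ ≤ N u / (∑ j, bs n j * u j) := div_le_div_of_nonneg_left (hNnn u) hSn hle
      _ = (∑ j, c j * u j) / (∑ j, bs n j * u j) := by rw [hNu]
    calc ∫ u, (G m) u ∂(Qs n : Measure (Fin d → ℝ))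
        ≤ ∫ u, (∑ j, c j * u j) / (∑ j, bs n j * u j) ∂(Qs n : Measure (Fin d → ℝ)) :=
          integral_mono_ae hgint hri.1 hmono
    _ ≤ 1 := hri.2
  -- Step B : lintegral bound
  have hstepB : ∀ m : ℕ, ∫⁻ u, ENNReal.ofReal (g m u) ∂(P : Measure (Fin d → ℝ)) ≤ 1 := by
    intro m
    have hgint2 : Integrable (g m) (P : Measure (Fin d → ℝ)) := (G m).integrable _
    rw [← ofReal_integral_eq_lintegral_ofReal (f := g m) hgint2
      (Filter.Eventually.of_forall (hgnn m))]
    calc ENNReal.ofReal (∫ u, g m u ∂(P : Measure (Fin d → ℝ)))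
        ≤ ENNReal.ofReal 1 := ENNReal.ofReal_le_ofReal (hstepA m)
    _ = 1 := ENNReal.ofReal_one
  -- Step C : monotone convergence
  have hmono : ∀ u, Monotone fun m : ℕ => ENNReal.ofReal (g m u) := by
    intro u m m' hmm'
    refine ENNReal.ofReal_le_ofReal ?_
    refine min_le_min ?_ (by exact_mod_cast hmm')
    refine div_le_div_of_nonneg_left (hNnn u) (hdenpos m' u) ?_
    have h1 : 1/((m':ℝ)+1) ≤ 1/((m:ℝ)+1) := by
      apply one_div_le_one_div_of_le (by positivity)
      have : (m:ℝ) ≤ m' := by exact_mod_cast hmm'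
      linarith
    nlinarith [hTnn u]
  have htends : ∀ᵐ u ∂(P : Measure (Fin d → ℝ)),
      Tendsto (fun m : ℕ => ENNReal.ofReal (g m u)) atTop
        (nhds (ENNReal.ofReal ((∑ j, c j * u j) / (∑ j, b j * u j)))) := by
    filter_upwards [AC.ae_orthant hP] with u hu
    have hmax : ∀ j, max (u j) 0 = u j := fun j => max_eq_left (hu j).le
    have hNu : N u = ∑ j, c j * u j := by
      rw [hNdef]; exact Finset.sum_congr rfl fun j _ => by rw [hmax j]
    have hDu : D u = ∑ j, b j * u j := by
      rw [hDdef]; exact Finset.sum_congr rfl fun j _ => by rw [hmax j]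
    have hDpos : 0 < D u := by rw [hDu]; exact AC.sum_pos hb hu
    have hden : Tendsto (fun m : ℕ => D u + (1/((m:ℝ)+1)) * (T u + 1)) atTop (nhds (D u)) := by
      have h1 := tendsto_one_div_add_atTop_nhds_zero_nat (𝕜 := ℝ)
      have h2 := h1.mul_const (T u + 1)
      rw [zero_mul] at h2
      have := (tendsto_const_nhds (x := D u) (f := atTop)).add h2
      simpa using this
    have hratio : Tendsto (fun m : ℕ => N u / (D u + (1/((m:ℝ)+1)) * (T u + 1))) atTop
        (nhds (N u / D u)) := tendsto_const_nhds.div hden hDpos.ne'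
    have hminev : ∀ᶠ m : ℕ in atTop,
        min (N u / (D u + (1/((m:ℝ)+1)) * (T u + 1))) (m:ℝ)
          = N u / (D u + (1/((m:ℝ)+1)) * (T u + 1)) := by
      have hev1 := tendsto_natCast_atTop_atTop (R := ℝ).eventually_ge_atTop (N u / D u)
      filter_upwards [hev1] with m hm
      refine min_eq_left ?_
      refine le_trans (div_le_div_of_nonneg_left (hNnn u) hDpos ?_) hm
      have h3 : (0:ℝ) < 1/((m:ℝ)+1) := by positivity
      nlinarith [hTnn u]
    have hgt : Tendsto (fun m : ℕ => g m u) atTop (nhds ((∑ j, c j * u j) / (∑ j, b j * u j))) := by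
      rw [← hNu, ← hDu]
      exact Tendsto.congr' (by filter_upwards [hminev] with m hm; exact hm.symm) hratio
    exact (ENNReal.continuous_ofReal.tendsto _).comp hgt
  have hfinal := lintegral_tendsto_of_tendsto_of_monotone
    (f := fun m u => ENNReal.ofReal (g m u))
    (F := fun u => ENNReal.ofReal ((∑ j, c j * u j) / (∑ j, b j * u j)))
    (μ := (P : Measure (Fin d → ℝ)))
    (fun m => ((hgcont m).measurable.ennreal_ofReal).aemeasurable)
    (Filter.Eventually.of_forall hmono) htends
  exact le_of_tendsto hfinal (Filter.Eventually.of_forall hstepB)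
/-- Algoet–Cover continuity of log-optimal portfolio returns under weak convergence:
if `Q_n → Q_∞` weakly, each `Q_n` lives on the positive orthant with
`E_{Q_n}|log U^{(j)}| < ∞`, and `b_n` is log-optimal for `Q_n`, then for
`Q_∞`-almost every `u`, `⟨b_n, u⟩ → ⟨b*, u⟩`, the value being the same for every
log-optimal portfolio `b*` of `Q_∞`. -/
theorem stmt13 (d : ℕ)
    (Q : ℕ → ProbabilityMeasure (Fin d → ℝ)) (Qinf : ProbabilityMeasure (Fin d → ℝ))
    (hsupp : ∀ n, (Q n : Measure (Fin d → ℝ)) {u | ∀ j, 0 < u j} = 1)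
    (hsuppinf : (Qinf : Measure (Fin d → ℝ)) {u | ∀ j, 0 < u j} = 1)
    (hint : ∀ n j, Integrable (fun u : Fin d → ℝ => |Real.log (u j)|) (Q n))
    (hintinf : ∀ j, Integrable (fun u : Fin d → ℝ => |Real.log (u j)|) Qinf)
    (hweak : Tendsto Q atTop (nhds Qinf))
    (b : ℕ → (Fin d → ℝ)) (hbsimplex : ∀ n, b n ∈ stdSimplex ℝ (Fin d))
    (hbopt : ∀ n, ∀ c ∈ stdSimplex ℝ (Fin d),
      ∫ u, Real.log (∑ j, c j * u j) ∂(Q n : Measure (Fin d → ℝ))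
        ≤ ∫ u, Real.log (∑ j, b n j * u j) ∂(Q n : Measure (Fin d → ℝ))) :
    ∀ bstar ∈ stdSimplex ℝ (Fin d),
      (∀ c ∈ stdSimplex ℝ (Fin d),
        ∫ u, Real.log (∑ j, c j * u j) ∂(Qinf : Measure (Fin d → ℝ))
          ≤ ∫ u, Real.log (∑ j, bstar j * u j) ∂(Qinf : Measure (Fin d → ℝ))) →
      ∀ᵐ u ∂(Qinf : Measure (Fin d → ℝ)),
        Tendsto (fun n => ∑ j, b n j * u j) atTop (nhds (∑ j, bstar j * u j)) := by
  intro bstar hbstar hstaropt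
  rcases Nat.eq_zero_or_pos d with rfl | hd
  · exfalso
    have := hbstar.2
    simp at this
  -- per-n key inequality
  have hQn : ∀ n, ∀ c ∈ stdSimplex ℝ (Fin d),
      ∫⁻ u, ENNReal.ofReal ((∑ j, c j * u j) / (∑ j, b n j * u j))
        ∂(Q n : Measure (Fin d → ℝ)) ≤ 1 := by
    intro n c hc
    exact AC.lintegral_ratio_le_one hd (hsupp n) (hint n) (hbsimplex n) (hbopt n) hc
  -- the set of log-optimal portfolios for Qinf
  set B : Set (Fin d → ℝ) := {b' | b' ∈ stdSimplex ℝ (Fin d) ∧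
    ∀ c ∈ stdSimplex ℝ (Fin d),
      ∫ u, Real.log (∑ j, c j * u j) ∂(Qinf : Measure (Fin d → ℝ))
        ≤ ∫ u, Real.log (∑ j, b' j * u j) ∂(Qinf : Measure (Fin d → ℝ))} with hBdef
  obtain ⟨s, hscount, hsdense⟩ := TopologicalSpace.exists_countable_dense ↥B
  set Dset : Set (Fin d → ℝ) := Subtype.val '' s with hDsetdef
  have hDcount : Dset.Countable := hscount.image _
  have hDsub : Dset ⊆ B := by
    rintro x ⟨y, _, rfl⟩
    exact y.2
  have haeD : ∀ᵐ u ∂(Qinf : Measure (Fin d → ℝ)), ∀ b' ∈ Dset,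
      ∑ j, b' j * u j = ∑ j, bstar j * u j := by
    rw [ae_ball_iff hDcount]
    intro b' hb'
    have hb'B := hDsub hb'
    exact AC.unique_ae hd hsuppinf hintinf hb'B.1 hbstar hb'B.2 hstaropt
  filter_upwards [haeD, AC.ae_orthant hsuppinf] with u hDeq hu
  -- for all b' in B, the return equals bstar's
  have hBeq : ∀ b' ∈ B, ∑ j, b' j * u j = ∑ j, bstar j * u j := by
    intro b' hb'
    have hmem : (⟨b', hb'⟩ : ↥B) ∈ closure s := hsdense _
    obtain ⟨x, hxs, hxlim⟩ := mem_closure_iff_seq_limit.mp hmem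
    have hxval : Tendsto (fun k => (x k : Fin d → ℝ)) atTop (nhds b') :=
      (continuous_subtype_val.tendsto _).comp hxlim
    have hScont : Continuous fun v : Fin d → ℝ => ∑ j, v j * u j :=
      continuous_finset_sum _ fun j _ => (continuous_apply j).mul continuous_const
    have h1 : Tendsto (fun k => ∑ j, (x k : Fin d → ℝ) j * u j) atTop
        (nhds (∑ j, b' j * u j)) := (hScont.tendsto _).comp hxval
    have h2 : (fun k => ∑ j, (x k : Fin d → ℝ) j * u j)
        = fun _ => ∑ j, bstar j * u j := by
      funext k
      exact hDeq _ (Set.mem_image_of_mem _ (hxs k))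
    rw [h2] at h1
    exact tendsto_nhds_unique tendsto_const_nhds h1 |>.symm ▸ rfl
  -- conclude via subsequences
  refine Filter.tendsto_of_subseq_tendsto ?_
  intro ns hns
  obtain ⟨b', hb'mem, φ, hφ, hφlim⟩ := (isCompact_stdSimplex ℝ (Fin d)).tendsto_subseq
    (x := fun k => b (ns k)) (fun k => hbsimplex (ns k))
  have hQcomp : Tendsto (fun k => Q (ns (φ k))) atTop (nhds Qinf) :=
    hweak.comp (hns.comp hφ.tendsto_atTop)
  have hφlim' : Tendsto (fun k => b (ns (φ k))) atTop (nhds b') := hφlim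
  have hratio : ∀ c ∈ stdSimplex ℝ (Fin d),
      ∫⁻ u, ENNReal.ofReal ((∑ j, c j * u j) / (∑ j, b' j * u j))
        ∂(Qinf : Measure (Fin d → ℝ)) ≤ 1 := by
    intro c hc
    exact AC.limit_ratio hd hQcomp (fun k => hsupp _) hsuppinf
      (fun k => hbsimplex _) hb'mem hφlim' hc (fun k => hQn (ns (φ k)) c hc)
  have hopt' := AC.opt_of_ratio hd hsuppinf hintinf hb'mem hratio
  have hb'B : b' ∈ B := ⟨hb'mem, hopt'⟩
  have heq := hBeq b' hb'B
  refine ⟨φ, ?_⟩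
  have hScont : Continuous fun v : Fin d → ℝ => ∑ j, v j * u j :=
    continuous_finset_sum _ fun j _ => (continuous_apply j).mul continuous_const
  have := (hScont.tendsto b').comp hφlim'
  rw [heq] at this
  exact this
end

section
/- For a distribution Q on R^d_+ with E_Q[|log U^{(j)}|] < infinity for all j, if b_1* and b_2* are both maximizers of b -> E_Q[log <b, U>] over the simplex Delta_d, then <b_1*, U> = <b_2*, U> Q-almost surely. -/
open MeasureTheory

section Aux

variable {d : ℕ}

/-- Bounds on the portfolio return for positive prices. -/
lemma stmt14_bounds [NeZero d] (b u : Fin d → ℝ) (hb : b ∈ stdSimplex ℝ (Fin d))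
    (hu : ∀ j, 0 < u j) :
    Finset.univ.inf' Finset.univ_nonempty u ≤ ∑ j, b j * u j ∧
      ∑ j, b j * u j ≤ Finset.univ.sup' Finset.univ_nonempty u := by
  constructor
  · calc Finset.univ.inf' Finset.univ_nonempty u
        = ∑ j, b j * Finset.univ.inf' Finset.univ_nonempty u := by
          rw [← Finset.sum_mul, hb.2, one_mul]
    _ ≤ ∑ j, b j * u j := by
        apply Finset.sum_le_sum
        intro j _
        exact mul_le_mul_of_nonneg_left (Finset.inf'_le _ (Finset.mem_univ j)) (hb.1 j)
  · calc ∑ j, b j * u j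
        ≤ ∑ j, b j * Finset.univ.sup' Finset.univ_nonempty u := by
          apply Finset.sum_le_sum
          intro j _
          exact mul_le_mul_of_nonneg_left (Finset.le_sup' _ (Finset.mem_univ j)) (hb.1 j)
    _ = Finset.univ.sup' Finset.univ_nonempty u := by rw [← Finset.sum_mul, hb.2, one_mul]

lemma stmt14_pos [NeZero d] (b u : Fin d → ℝ) (hb : b ∈ stdSimplex ℝ (Fin d))
    (hu : ∀ j, 0 < u j) : 0 < ∑ j, b j * u j := by
  have h := (stmt14_bounds b u hb hu).1
  have : 0 < Finset.univ.inf' Finset.univ_nonempty u := by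
    obtain ⟨j, _, hj⟩ := Finset.exists_mem_eq_inf' Finset.univ_nonempty u
    rw [hj]; exact hu j
  linarith

lemma stmt14_logbound [NeZero d] (b u : Fin d → ℝ) (hb : b ∈ stdSimplex ℝ (Fin d))
    (hu : ∀ j, 0 < u j) :
    |Real.log (∑ j, b j * u j)| ≤ ∑ j, |Real.log (u j)| := by
  obtain ⟨h1, h2⟩ := stmt14_bounds b u hb hu
  obtain ⟨j₁, _, hj₁⟩ := Finset.exists_mem_eq_inf' (Finset.univ_nonempty (α := Fin d)) u
  obtain ⟨j₂, _, hj₂⟩ := Finset.exists_mem_eq_sup' (Finset.univ_nonempty (α := Fin d)) u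
  have hc : 0 < Finset.univ.inf' Finset.univ_nonempty u := by rw [hj₁]; exact hu j₁
  have hlog1 : Real.log (u j₁) ≤ Real.log (∑ j, b j * u j) := by
    rw [← hj₁] at *; exact Real.log_le_log hc h1
  have hlog2 : Real.log (∑ j, b j * u j) ≤ Real.log (u j₂) := by
    rw [← hj₂] at *; exact Real.log_le_log (lt_of_lt_of_le hc h1) h2
  rw [abs_le]
  constructor
  · have : -|Real.log (u j₁)| ≤ Real.log (u j₁) := neg_abs_le _
    have h3 : |Real.log (u j₁)| ≤ ∑ j, |Real.log (u j)| :=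
      Finset.single_le_sum (f := fun j => |Real.log (u j)|) (fun j _ => abs_nonneg _)
        (Finset.mem_univ j₁)
    linarith
  · have : Real.log (u j₂) ≤ |Real.log (u j₂)| := le_abs_self _
    have h3 : |Real.log (u j₂)| ≤ ∑ j, |Real.log (u j)| :=
      Finset.single_le_sum (f := fun j => |Real.log (u j)|) (fun j _ => abs_nonneg _)
        (Finset.mem_univ j₂)
    linarith

lemma stmt14_integrable [NeZero d] (Q : Measure (Fin d → ℝ)) [IsProbabilityMeasure Q]
    (hS : ∀ᵐ u ∂Q, ∀ j, 0 < u j)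
    (hint : ∀ j, Integrable (fun u : Fin d → ℝ => |Real.log (u j)|) Q)
    (b : Fin d → ℝ) (hb : b ∈ stdSimplex ℝ (Fin d)) :
    Integrable (fun u : Fin d → ℝ => Real.log (∑ j, b j * u j)) Q := by
  have hmeas : AEStronglyMeasurable (fun u : Fin d → ℝ => Real.log (∑ j, b j * u j)) Q := by
    apply Measurable.aestronglyMeasurable
    exact Real.measurable_log.comp (by fun_prop)
  have hintsum : Integrable (fun u : Fin d → ℝ => ∑ j, |Real.log (u j)|) Q :=
    integrable_finset_sum _ fun j _ => hint j
  refine Integrable.mono' hintsum hmeas ?_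
  filter_upwards [hS] with u hu
  rw [Real.norm_eq_abs]
  exact stmt14_logbound b u hb hu

end Aux

/-- Uniqueness of the log-optimal return: if `b₁*` and `b₂*` both maximize
`b ↦ E_Q[log ⟨b, U⟩]` over the simplex `Δ_d`, then `⟨b₁*, U⟩ = ⟨b₂*, U⟩` `Q`-a.s. -/
theorem stmt14 (d : ℕ) (Q : Measure (Fin d → ℝ)) [IsProbabilityMeasure Q]
    (hsupp : Q {u | ∀ j, 0 < u j} = 1)
    (hint : ∀ j, Integrable (fun u : Fin d → ℝ => |Real.log (u j)|) Q)
    (b₁ b₂ : Fin d → ℝ)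
    (hb₁ : b₁ ∈ stdSimplex ℝ (Fin d)) (hb₂ : b₂ ∈ stdSimplex ℝ (Fin d))
    (hopt₁ : ∀ c ∈ stdSimplex ℝ (Fin d),
      ∫ u, Real.log (∑ j, c j * u j) ∂Q ≤ ∫ u, Real.log (∑ j, b₁ j * u j) ∂Q)
    (hopt₂ : ∀ c ∈ stdSimplex ℝ (Fin d),
      ∫ u, Real.log (∑ j, c j * u j) ∂Q ≤ ∫ u, Real.log (∑ j, b₂ j * u j) ∂Q) :
    ∀ᵐ u ∂Q, ∑ j, b₁ j * u j = ∑ j, b₂ j * u j := by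
  -- d ≠ 0
  rcases Nat.eq_zero_or_pos d with hd | hd
  · exfalso
    have := hb₁.2
    subst hd
    simp at this
  haveI : NeZero d := ⟨hd.ne'⟩
  -- a.e. positivity
  have hSmeas : MeasurableSet {u : Fin d → ℝ | ∀ j, 0 < u j} := by
    have : {u : Fin d → ℝ | ∀ j, 0 < u j} = ⋂ j, {u | 0 < u j} := by
      ext u; simp [Set.mem_iInter]
    rw [this]
    exact MeasurableSet.iInter fun j => measurableSet_lt measurable_const (measurable_pi_apply j)
  have hS : ∀ᵐ u ∂Q, ∀ j, 0 < u j := by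
    rw [ae_iff]
    have := (prob_compl_eq_zero_iff hSmeas).2 hsupp
    simpa [Set.compl_setOf] using this
  -- midpoint portfolio
  set m : Fin d → ℝ := fun j => (b₁ j + b₂ j) / 2 with hm
  have hminS : m ∈ stdSimplex ℝ (Fin d) := by
    constructor
    · intro j
      have := hb₁.1 j
      have := hb₂.1 j
      simp only [hm]
      linarith
    · simp only [hm]
      rw [← Finset.sum_div, Finset.sum_add_distrib, hb₁.2, hb₂.2]
      norm_num
  -- integrability
  have hI₁ := stmt14_integrable Q hS hint b₁ hb₁
  have hI₂ := stmt14_integrable Q hS hint b₂ hb₂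
  have hIm := stmt14_integrable Q hS hint m hminS
  -- equal optimal values
  have hV : ∫ u, Real.log (∑ j, b₁ j * u j) ∂Q = ∫ u, Real.log (∑ j, b₂ j * u j) ∂Q :=
    le_antisymm (hopt₂ b₁ hb₁) (hopt₁ b₂ hb₂)
  -- the nonnegative deficiency function
  set f : (Fin d → ℝ) → ℝ := fun u =>
    Real.log (∑ j, m j * u j)
      - (Real.log (∑ j, b₁ j * u j) + Real.log (∑ j, b₂ j * u j)) / 2 with hf
  have hI2' : Integrable (fun u : Fin d → ℝ =>
      (Real.log (∑ j, b₁ j * u j) + Real.log (∑ j, b₂ j * u j)) / 2) Q :=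
    (hI₁.add hI₂).div_const 2
  have hIf : Integrable f Q := hIm.sub hI2'
  have hmid : ∀ u : Fin d → ℝ, ∑ j, m j * u j
      = ((∑ j, b₁ j * u j) + (∑ j, b₂ j * u j)) / 2 := by
    intro u
    calc ∑ j, m j * u j = ∑ j, (b₁ j * u j + b₂ j * u j) / 2 :=
          Finset.sum_congr rfl (fun j _ => by simp only [hm]; ring)
    _ = (∑ j, (b₁ j * u j + b₂ j * u j)) / 2 := by rw [Finset.sum_div]
    _ = ((∑ j, b₁ j * u j) + ∑ j, b₂ j * u j) / 2 := by rw [Finset.sum_add_distrib]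
  have hconc : ∀ x y : ℝ, 0 < x → 0 < y →
      (Real.log x + Real.log y) / 2 ≤ Real.log ((x + y) / 2) := by
    intro x y hx hy
    have hcon : ConcaveOn ℝ (Set.Ioi 0) Real.log := strictConcaveOn_log_Ioi.concaveOn
    have h := hcon.2 (Set.mem_Ioi.2 hx) (Set.mem_Ioi.2 hy)
      (by norm_num : (0:ℝ) ≤ 1/2) (by norm_num : (0:ℝ) ≤ 1/2) (by norm_num)
    simp only [smul_eq_mul] at h
    calc (Real.log x + Real.log y) / 2 = 1/2 * Real.log x + 1/2 * Real.log y := by ring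
    _ ≤ Real.log (1/2 * x + 1/2 * y) := h
    _ = Real.log ((x + y) / 2) := by ring_nf
  have hstrict : ∀ x y : ℝ, 0 < x → 0 < y → x ≠ y →
      (Real.log x + Real.log y) / 2 < Real.log ((x + y) / 2) := by
    intro x y hx hy hxy
    have h := strictConcaveOn_log_Ioi.2 (Set.mem_Ioi.2 hx) (Set.mem_Ioi.2 hy) hxy
      (by norm_num : (0:ℝ) < 1/2) (by norm_num : (0:ℝ) < 1/2) (by norm_num)
    simp only [smul_eq_mul] at h
    calc (Real.log x + Real.log y) / 2 = 1/2 * Real.log x + 1/2 * Real.log y := by ring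
    _ < Real.log (1/2 * x + 1/2 * y) := h
    _ = Real.log ((x + y) / 2) := by ring_nf
  have hfnn : ∀ᵐ u ∂Q, 0 ≤ f u := by
    filter_upwards [hS] with u hu
    have hx := stmt14_pos b₁ u hb₁ hu
    have hy := stmt14_pos b₂ u hb₂ hu
    have := hconc _ _ hx hy
    simp only [hf, hmid u]
    linarith
  have hintf : ∫ u, f u ∂Q ≤ 0 := by
    have h1 : ∫ u, f u ∂Q = (∫ u, Real.log (∑ j, m j * u j) ∂Q)
        - ∫ u, (Real.log (∑ j, b₁ j * u j) + Real.log (∑ j, b₂ j * u j)) / 2 ∂Q := by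
      simp only [hf]
      exact integral_sub hIm hI2'
    have h2 : ∫ u, (Real.log (∑ j, b₁ j * u j) + Real.log (∑ j, b₂ j * u j)) / 2 ∂Q
        = ((∫ u, Real.log (∑ j, b₁ j * u j) ∂Q) + ∫ u, Real.log (∑ j, b₂ j * u j) ∂Q) / 2 := by
      rw [integral_div, integral_add hI₁ hI₂]
    have h3 := hopt₁ m hminS
    rw [h1, h2, ← hV]
    linarith
  have hintf0 : ∫ u, f u ∂Q = 0 :=
    le_antisymm hintf (integral_nonneg_of_ae hfnn)
  have hf0 : ∀ᵐ u ∂Q, f u = 0 := by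
    have h := (integral_eq_zero_iff_of_nonneg_ae hfnn hIf).1 hintf0
    filter_upwards [h] with u hu1
    simpa using hu1
  filter_upwards [hf0, hS] with u hfu hu
  by_contra hne
  have hx := stmt14_pos b₁ u hb₁ hu
  have hy := stmt14_pos b₂ u hb₂ hu
  have := hstrict _ _ hx hy hne
  simp only [hf, hmid u] at hfu
  linarith
end

section
/- Let (X_n)_{n in Z} be a stationary ergodic process with values in R^d_+ with E|log X_0^{(j)}| < infinity for all j, and let S_n* denote the wealth of the log-optimal (conditionally optimal) portfolio strategy after n periods starting from S_0* = 1. Then for any other causal portfolio strategy B with wealth S_n, limsup_{n -> infinity} (1/n) log (S_n / S_n*) <= 0 almost surely. -/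
open MeasureTheory Filter

lemma my_simplex_dot_pos {d : ℕ} {v x : Fin d → ℝ} (hv : v ∈ stdSimplex ℝ (Fin d))
    (hx : ∀ j, 0 < x j) : 0 < ∑ j, v j * x j := by
  obtain ⟨hv0, hv1⟩ := hv
  have hex : ∃ j, 0 < v j := by
    by_contra h
    push_neg at h
    have : (1:ℝ) ≤ 0 := hv1 ▸ Finset.sum_nonpos (fun j _ => h j)
    linarith
  obtain ⟨j0, hj0⟩ := hex
  exact Finset.sum_pos' (fun j _ => mul_nonneg (hv0 j) (hx j).le)
    ⟨j0, Finset.mem_univ _, mul_pos hj0 (hx j0)⟩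

lemma my_simplex_dot_log_abs {d : ℕ} {v x : Fin d → ℝ} (hv : v ∈ stdSimplex ℝ (Fin d))
    (hx : ∀ j, 0 < x j) : |Real.log (∑ j, v j * x j)| ≤ ∑ j, |Real.log (x j)| := by
  obtain ⟨hv0, hv1⟩ := hv
  have hne : (Finset.univ : Finset (Fin d)).Nonempty := by
    by_contra h
    rw [Finset.not_nonempty_iff_eq_empty] at h
    rw [h, Finset.sum_empty] at hv1
    linarith
  obtain ⟨jmax, _, hjmax⟩ := Finset.exists_max_image Finset.univ x hne
  obtain ⟨jmin, _, hjmin⟩ := Finset.exists_min_image Finset.univ x hne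
  have hub : ∑ j, v j * x j ≤ x jmax := by
    calc ∑ j, v j * x j ≤ ∑ j, v j * x jmax :=
          Finset.sum_le_sum (fun j _ => mul_le_mul_of_nonneg_left (hjmax j (Finset.mem_univ _)) (hv0 j))
      _ = x jmax := by rw [← Finset.sum_mul, hv1, one_mul]
  have hlb : x jmin ≤ ∑ j, v j * x j := by
    calc x jmin = ∑ j, v j * x jmin := by rw [← Finset.sum_mul, hv1, one_mul]
      _ ≤ ∑ j, v j * x j :=
          Finset.sum_le_sum (fun j _ => mul_le_mul_of_nonneg_left (hjmin j (Finset.mem_univ _)) (hv0 j))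
  have hpos : 0 < ∑ j, v j * x j := lt_of_lt_of_le (hx jmin) hlb
  rw [abs_le]
  constructor
  · have h1 : Real.log (x jmin) ≤ Real.log (∑ j, v j * x j) :=
      Real.log_le_log (hx jmin) hlb
    have h2 : -|Real.log (x jmin)| ≤ Real.log (x jmin) := neg_abs_le _
    have h3 : |Real.log (x jmin)| ≤ ∑ j, |Real.log (x j)| :=
      Finset.single_le_sum (f := fun j => |Real.log (x j)|) (fun j _ => abs_nonneg _) (Finset.mem_univ jmin)
    linarith
  · have h1 : Real.log (∑ j, v j * x j) ≤ Real.log (x jmax) := Real.log_le_log hpos hub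
    have h2 : Real.log (x jmax) ≤ |Real.log (x jmax)| := le_abs_self _
    have h3 : |Real.log (x jmax)| ≤ ∑ j, |Real.log (x j)| :=
      Finset.single_le_sum (f := fun j => |Real.log (x j)|) (fun j _ => abs_nonneg _) (Finset.mem_univ jmax)
    linarith

lemma my_slope_lb {a c l : ℝ} (ha : 0 < a) (hc : 0 < c) (hl0 : 0 < l) (hl1 : l ≤ 1) :
    Real.log c - Real.log a ≤ (Real.log ((1-l)*a + l*c) - Real.log a)/l := by
  have hconc := (strictConcaveOn_log_Ioi.concaveOn).2 (Set.mem_Ioi.mpr ha) (Set.mem_Ioi.mpr hc)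
    (by linarith : (0:ℝ) ≤ 1 - l) hl0.le (by ring)
  simp only [smul_eq_mul] at hconc
  rw [le_div_iff₀ hl0]
  nlinarith [hconc]

lemma my_slope_ub {a c l : ℝ} (ha : 0 < a) (hc : 0 < c) (hl0 : 0 < l) (hl1 : l ≤ 1) :
    (Real.log ((1-l)*a + l*c) - Real.log a)/l ≤ c/a - 1 := by
  have hs : 0 < (1-l)*a + l*c := by nlinarith
  have h1 : Real.log ((1-l)*a + l*c) - Real.log a = Real.log (((1-l)*a + l*c)/a) :=
    (Real.log_div hs.ne' ha.ne').symm
  have h2 : ((1-l)*a + l*c)/a = 1 + l*(c/a - 1) := by field_simp; ring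
  have h3 : Real.log (1 + l*(c/a-1)) ≤ 1 + l*(c/a-1) - 1 := by
    apply Real.log_le_sub_one_of_pos
    rw [← h2]; positivity
  rw [div_le_iff₀ hl0, h1, h2]
  nlinarith [h3]

lemma my_slope_tendsto {a c : ℝ} (ha : 0 < a) {u : ℕ → ℝ}
    (hu0 : ∀ k, u k ≠ 0) (hu : Tendsto u atTop (nhds 0)) :
    Tendsto (fun k => (Real.log ((1 - u k)*a + u k * c) - Real.log a)/(u k)) atTop
      (nhds (c/a - 1)) := by
  have hd : HasDerivAt (fun l : ℝ => Real.log (a + l*(c-a))) (c/a - 1) 0 := by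
    have h1 : HasDerivAt (fun l : ℝ => a + l*(c-a)) (c-a) 0 := by
      simpa using ((hasDerivAt_id (0:ℝ)).mul_const (c-a)).const_add a
    have h2 := h1.log (by simpa using ha.ne')
    have h3 : (c-a)/(a + 0*(c-a)) = c/a - 1 := by rw [zero_mul, add_zero, sub_div, div_self ha.ne']
    rwa [h3] at h2
  rw [hasDerivAt_iff_tendsto_slope] at hd
  have hu' : Tendsto u atTop (nhdsWithin 0 {(0:ℝ)}ᶜ) :=
    tendsto_nhdsWithin_of_tendsto_nhds_of_eventually_within _ hu
      (Eventually.of_forall fun k => hu0 k)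
  have := hd.comp hu'
  refine this.congr fun k => ?_
  simp only [Function.comp_apply, slope_def_field]
  rw [div_eq_div_iff (by simpa using hu0 k) (by simpa using hu0 k)]
  have : a + u k * (c - a) = (1 - u k) * a + u k * c := by ring
  simp [this]

lemma my_min_sub_one (x M : ℝ) : min x M - 1 = min (x - 1) (M - 1) := by
  rcases le_total x M with h | h
  · rw [min_eq_left h, min_eq_left (by linarith)]
  · rw [min_eq_right h, min_eq_right (by linarith)]

lemma my_integral_mul_le {Ω : Type*} {m : MeasurableSpace Ω} [m0 : MeasurableSpace Ω]
    (hm : m ≤ m0) (P : Measure Ω) [IsProbabilityMeasure P] {Z f g : Ω → ℝ} {C : ℝ}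
    (hZ : Measurable[m] Z) (hZ0 : ∀ ω, 0 ≤ Z ω) (hZb : ∀ ω, Z ω ≤ C)
    (hf : Integrable f P) (hg : Integrable g P)
    (hle : P[f|m] ≤ᵐ[P] P[g|m]) :
    ∫ ω, Z ω * f ω ∂P ≤ ∫ ω, Z ω * g ω ∂P := by
  haveI : SigmaFinite (P.trim hm) := inferInstance
  have hZm0 : Measurable Z := hZ.mono hm le_rfl
  have hZbdd : ∃ C', ∀ ω, ‖Z ω‖ ≤ C' :=
    ⟨C, fun ω => by rw [Real.norm_eq_abs, abs_of_nonneg (hZ0 ω)]; exact hZb ω⟩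
  have pull : ∀ (h : Ω → ℝ), Integrable h P →
      ∫ ω, Z ω * h ω ∂P = ∫ ω, Z ω * (P[h|m]) ω ∂P := by
    intro h hh
    have hmul : Integrable (Z * h) P := hh.bdd_mul hZm0.aestronglyMeasurable (ae_of_all _ hZbdd.choose_spec)
    have h1 := condExp_mul_of_stronglyMeasurable_left hZ.stronglyMeasurable hmul hh
    calc ∫ ω, Z ω * h ω ∂P = ∫ ω, (Z * h) ω ∂P := rfl
      _ = ∫ ω, (P[Z * h|m]) ω ∂P := (integral_condExp hm).symm
      _ = ∫ ω, (Z * P[h|m]) ω ∂P := integral_congr_ae h1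
      _ = ∫ ω, Z ω * (P[h|m]) ω ∂P := rfl
  have hint1 : Integrable (Z * P[f|m]) P :=
    integrable_condExp.bdd_mul hZm0.aestronglyMeasurable (ae_of_all _ hZbdd.choose_spec)
  have hint2 : Integrable (Z * P[g|m]) P :=
    integrable_condExp.bdd_mul hZm0.aestronglyMeasurable (ae_of_all _ hZbdd.choose_spec)
  rw [pull f hf, pull g hg]
  refine integral_mono_ae hint1 hint2 ?_
  filter_upwards [hle] with ω h
  exact mul_le_mul_of_nonneg_left h (hZ0 ω)

/-- Algoet–Cover optimality (first assertion of Lemma 6): for a stationary ergodic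
`ℝ^d_+`-valued process with `E|log X_0^{(j)}| < ∞` (realized by an ergodic shift `T`
with `X_i ∘ T = X_{i-1}`), if `S_n^*` is the wealth of the conditionally log-optimal
strategy `b*` and `S_n` the wealth of any other causal portfolio strategy `b`, then
`limsup_n (1/n) log (S_n / S_n^*) ≤ 0` almost surely. -/
theorem stmt16 {Ω : Type*} [m0 : MeasurableSpace Ω] (P : Measure Ω) [IsProbabilityMeasure P]
    (d : ℕ) (X : ℤ → Ω → (Fin d → ℝ))
    (hXmeas : ∀ i, Measurable (X i)) (hXpos : ∀ i ω j, 0 < X i ω j)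
    (hint : ∀ j, Integrable (fun ω => |Real.log (X 0 ω j)|) P)
    (T : Ω → Ω) (hT : Ergodic T P) (hshift : ∀ i ω, X i (T ω) = X (i - 1) ω)
    -- past observations `X_1^{n}` and the filtration they generate
    (hist : (n : ℕ) → Ω → (Fin n → Fin d → ℝ))
    (hhist : ∀ n ω k, hist n ω k = X ((k : ℤ) + 1) ω)
    (F : ℕ → MeasurableSpace Ω)
    (hF : ∀ n, F n = MeasurableSpace.comap (hist n) inferInstance)
    -- the log-optimal strategy `b*` and an arbitrary causal strategy `b`
    (bstar b : (n : ℕ) → (Fin n → Fin d → ℝ) → (Fin d → ℝ))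
    (hbstarmeas : ∀ n, Measurable (bstar n)) (hbmeas : ∀ n, Measurable (b n))
    (hbstarsimplex : ∀ n h, bstar n h ∈ stdSimplex ℝ (Fin d))
    (hbsimplex : ∀ n h, b n h ∈ stdSimplex ℝ (Fin d))
    (hopt : ∀ n, ∀ c : (Fin n → Fin d → ℝ) → (Fin d → ℝ), Measurable c →
      (∀ h, c h ∈ stdSimplex ℝ (Fin d)) →
      P[fun ω => Real.log (∑ j, c (hist n ω) j * X (n + 1) ω j) | F n]
        ≤ᵐ[P] P[fun ω => Real.log (∑ j, bstar n (hist n ω) j * X (n + 1) ω j) | F n])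
    -- the corresponding wealths, starting from initial capital 1
    (Sstar S : ℕ → Ω → ℝ)
    (hSstar : ∀ n ω, Sstar n ω
      = ∏ i ∈ Finset.range n, ∑ j, bstar i (hist i ω) j * X (i + 1) ω j)
    (hS : ∀ n ω, S n ω
      = ∏ i ∈ Finset.range n, ∑ j, b i (hist i ω) j * X (i + 1) ω j) :
    ∀ᵐ ω ∂P,
      limsup (fun n : ℕ =>
          (((1 : ℝ) / n * Real.log (S n ω / Sstar n ω) : ℝ) : EReal)) atTop ≤ 0 := by
  classical
  -- integrability of log of coordinates at nonnegative times
  have hXcomp : ∀ (n : ℕ) (ω : Ω), X (n : ℤ) (T^[n] ω) = X 0 ω := by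
    intro n
    induction n with
    | zero => intro ω; simp
    | succ k ih =>
        intro ω
        rw [Function.iterate_succ_apply']
        have h1 := hshift ((k+1 : ℕ) : ℤ) (T^[k] ω)
        have h2 : ((k+1 : ℕ) : ℤ) - 1 = (k : ℤ) := by push_cast; ring
        rw [h2] at h1
        rw [h1, ih ω]
  have hlogint : ∀ (n : ℕ) (j : Fin d), Integrable (fun ω => |Real.log (X (n : ℤ) ω j)|) P := by
    intro n j
    have hmeas : AEStronglyMeasurable (fun ω => |Real.log (X (n : ℤ) ω j)|) P :=
      (((measurable_pi_apply j).comp (hXmeas (n:ℤ))).log.abs).aestronglyMeasurable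
    have hTn : MeasurePreserving (T^[n]) P P := hT.toMeasurePreserving.iterate n
    rw [← hTn.integrable_comp hmeas]
    have heq : (fun ω => |Real.log (X (n : ℤ) ω j)|) ∘ (T^[n])
        = fun ω => |Real.log (X 0 ω j)| := by
      funext ω
      simp only [Function.comp_apply, hXcomp n ω]
    rw [heq]
    exact hint j
  have hlogint' : ∀ (n : ℕ) (j : Fin d),
      Integrable (fun ω => |Real.log (X ((n : ℤ) + 1) ω j)|) P := by
    intro n j
    have := hlogint (n+1) j
    rwa [Nat.cast_add, Nat.cast_one] at this
  have hgbint : ∀ n : ℕ, Integrable (fun ω => ∑ j, |Real.log (X ((n : ℤ) + 1) ω j)|) P :=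
    fun n => integrable_finset_sum _ (fun j _ => hlogint' n j)
  -- measurability infrastructure
  have hhistmeas : ∀ n, Measurable (hist n) := by
    intro n
    apply measurable_pi_lambda
    intro k
    have heq : (fun ω => hist n ω k) = X ((k : ℤ) + 1) := funext fun ω => hhist n ω k
    rw [heq]
    exact hXmeas _
  have hFle : ∀ n, F n ≤ m0 := by
    intro n
    rw [hF]
    exact (hhistmeas n).comap_le
  have hist_Fn : ∀ n, Measurable[F n] (hist n) := by
    intro n
    rw [hF n]
    exact Measurable.of_comap_le le_rfl
  have hXFn : ∀ (n i : ℕ), i < n → Measurable[F n] (X ((i : ℤ) + 1)) := by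
    intro n i hi
    have heq : X ((i : ℤ) + 1) = (fun h : Fin n → Fin d → ℝ => h ⟨i, hi⟩) ∘ hist n := by
      funext ω
      exact (hhist n ω ⟨i, hi⟩).symm
    rw [heq]
    exact (measurable_pi_apply _).comp (hist_Fn n)
  have hist_le_Fn : ∀ (n i : ℕ), i ≤ n → Measurable[F n] (hist i) := by
    intro n i hi
    have heq : hist i
        = (fun (h : Fin n → Fin d → ℝ) (k : Fin i) => h (Fin.castLE hi k)) ∘ hist n := by
      funext ω k
      show hist i ω k = hist n ω (Fin.castLE hi k)
      rw [hhist, hhist]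
      simp [Fin.coe_castLE]
    rw [heq]
    exact (measurable_pi_lambda _ fun k => measurable_pi_apply _).comp (hist_Fn n)
  have dot_meas : ∀ (m : MeasurableSpace Ω) (n : ℕ)
      (c : (Fin n → Fin d → ℝ) → Fin d → ℝ), Measurable c →
      Measurable[m] (hist n) → Measurable[m] (X ((n : ℤ) + 1)) →
      Measurable[m] (fun ω => ∑ j, c (hist n ω) j * X ((n : ℤ) + 1) ω j) := by
    intro m n c hc hh hX
    apply Finset.measurable_sum
    intro j _
    exact ((measurable_pi_apply j).comp (hc.comp hh)).mul ((measurable_pi_apply j).comp hX)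

  -- basic quantities
  set den : ℕ → Ω → ℝ := fun n ω => ∑ j, bstar n (hist n ω) j * X ((n:ℤ) + 1) ω j with hden
  set num : ℕ → Ω → ℝ := fun n ω => ∑ j, b n (hist n ω) j * X ((n:ℤ) + 1) ω j with hnum
  have hdenpos : ∀ n ω, 0 < den n ω :=
    fun n ω => my_simplex_dot_pos (hbstarsimplex n _) (fun j => hXpos _ ω j)
  have hnumpos : ∀ n ω, 0 < num n ω :=
    fun n ω => my_simplex_dot_pos (hbsimplex n _) (fun j => hXpos _ ω j)
  have hdenmeas : ∀ n, Measurable (den n) :=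
    fun n => dot_meas m0 n (bstar n) (hbstarmeas n) (hhistmeas n) (hXmeas _)
  have hnummeas : ∀ n, Measurable (num n) :=
    fun n => dot_meas m0 n (b n) (hbmeas n) (hhistmeas n) (hXmeas _)
  have hdenFn : ∀ n i, i < n → Measurable[F n] (den i) :=
    fun n i hi => dot_meas (F n) i (bstar i) (hbstarmeas i) (hist_le_Fn n i hi.le) (hXFn n i hi)
  have hnumFn : ∀ n i, i < n → Measurable[F n] (num i) :=
    fun n i hi => dot_meas (F n) i (b i) (hbmeas i) (hist_le_Fn n i hi.le) (hXFn n i hi)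
  set R : ℕ → Ω → ℝ := fun i ω => num i ω / den i ω with hR
  have hRpos : ∀ i ω, 0 < R i ω := fun i ω => div_pos (hnumpos i ω) (hdenpos i ω)
  have hRmeas : ∀ i, Measurable (R i) := fun i => (hnummeas i).div (hdenmeas i)
  have hRFn : ∀ n i, i < n → Measurable[F n] (R i) :=
    fun n i hi => (hnumFn n i hi).div (hdenFn n i hi)
  have hW : ∀ n ω, S n ω / Sstar n ω = ∏ i ∈ Finset.range n, R i ω := by
    intro n ω
    rw [hS n ω, hSstar n ω, ← Finset.prod_div_distrib]
  set WM : ℕ → ℕ → Ω → ℝ := fun M n ω => ∏ i ∈ Finset.range n, min (R i ω) (M:ℝ) with hWM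
  have hWMnonneg : ∀ M n ω, 0 ≤ WM M n ω :=
    fun M n ω => Finset.prod_nonneg fun i _ => le_min (hRpos i ω).le (Nat.cast_nonneg M)
  have hWMle : ∀ M n ω, WM M n ω ≤ (M:ℝ)^n := by
    intro M n ω
    calc WM M n ω ≤ ∏ _i ∈ Finset.range n, (M:ℝ) :=
          Finset.prod_le_prod (fun i _ => le_min (hRpos i ω).le (Nat.cast_nonneg M))
            (fun i _ => min_le_right _ _)
      _ = (M:ℝ)^n := by rw [Finset.prod_const, Finset.card_range]
  have hWMFn : ∀ M n, Measurable[F n] (WM M n) :=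
    fun M n => Finset.measurable_prod _ fun i hi =>
      ((hRFn n i (Finset.mem_range.mp hi)).min measurable_const)
  have hWMmeas : ∀ M n, Measurable (WM M n) := fun M n => (hWMFn M n).mono (hFle n) le_rfl
  have hWMint : ∀ M n, Integrable (WM M n) P := by
    intro M n
    refine Integrable.mono' (integrable_const ((M:ℝ)^n)) (hWMmeas M n).aestronglyMeasurable
      (Eventually.of_forall fun ω => ?_)
    rw [Real.norm_eq_abs, abs_of_nonneg (hWMnonneg M n ω)]
    exact hWMle M n ω
  -- the key one-step inequality
  have key : ∀ (n : ℕ) (Z : Ω → ℝ) (C : ℝ), Measurable[F n] Z → (∀ ω, 0 ≤ Z ω) →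
      (∀ ω, Z ω ≤ C) → ∀ M : ℝ, ∫ ω, Z ω * min (R n ω) M ∂P ≤ ∫ ω, Z ω ∂P := by
    intro n Z C hZ hZ0 hZb M
    have hZm0 : Measurable Z := hZ.mono (hFle n) le_rfl
    have hZnorm : ∃ C', ∀ ω, ‖Z ω‖ ≤ C' := ⟨C, fun ω => by
      rw [Real.norm_eq_abs, abs_of_nonneg (hZ0 ω)]; exact hZb ω⟩
    have hZint : Integrable Z P := by
      refine Integrable.mono' (integrable_const C) hZm0.aestronglyMeasurable
        (Eventually.of_forall fun ω => ?_)
      rw [Real.norm_eq_abs, abs_of_nonneg (hZ0 ω)]; exact hZb ω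
    have hfint : ∀ (c : (Fin n → Fin d → ℝ) → Fin d → ℝ), Measurable c →
        (∀ h, c h ∈ stdSimplex ℝ (Fin d)) →
        Integrable (fun ω => Real.log (∑ j, c (hist n ω) j * X ((n:ℤ) + 1) ω j)) P := by
      intro c hc hcs
      refine Integrable.mono' (hgbint n)
        ((dot_meas m0 n c hc (hhistmeas n) (hXmeas _)).log).aestronglyMeasurable
        (Eventually.of_forall fun ω => ?_)
      rw [Real.norm_eq_abs]
      exact my_simplex_dot_log_abs (hcs _) (fun j => hXpos _ ω j)
    set u : ℕ → ℝ := fun k => 1/((k:ℝ)+1) with hu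
    have hu0 : ∀ k, 0 < u k := fun k => by positivity
    have hu1 : ∀ k, u k ≤ 1 := by
      intro k
      rw [hu]
      rw [div_le_one (by positivity)]
      simp
    have hulim : Tendsto u atTop (nhds 0) := tendsto_one_div_add_atTop_nhds_zero_nat
    set ck : ℕ → (Fin n → Fin d → ℝ) → Fin d → ℝ :=
      fun k h j => (1 - u k) * bstar n h j + u k * b n h j with hck
    have hckmeas : ∀ k, Measurable (ck k) := by
      intro k
      apply measurable_pi_lambda
      intro j
      exact (measurable_const.mul ((measurable_pi_apply j).comp (hbstarmeas n))).add
        (measurable_const.mul ((measurable_pi_apply j).comp (hbmeas n)))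
    have hcksimplex : ∀ k h, ck k h ∈ stdSimplex ℝ (Fin d) := by
      intro k h
      constructor
      · intro j
        have h1 := (hbstarsimplex n h).1 j
        have h2 := (hbsimplex n h).1 j
        have h3 := hu0 k
        have h4 := hu1 k
        simp only [hck]
        nlinarith
      · have h1 := (hbstarsimplex n h).2
        have h2 := (hbsimplex n h).2
        simp only [hck]
        rw [Finset.sum_add_distrib, ← Finset.mul_sum, ← Finset.mul_sum, h1, h2]
        ring
    have hsum_eq : ∀ k ω, ∑ j, ck k (hist n ω) j * X ((n:ℤ)+1) ω j
        = (1 - u k) * den n ω + u k * num n ω := by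
      intro k ω
      simp only [hck, hden, hnum, add_mul, Finset.sum_add_distrib, Finset.mul_sum, mul_assoc]
    have hZle : ∀ k, ∫ ω, Z ω * Real.log (∑ j, ck k (hist n ω) j * X ((n:ℤ)+1) ω j) ∂P
        ≤ ∫ ω, Z ω * Real.log (den n ω) ∂P := by
      intro k
      exact my_integral_mul_le (hFle n) P hZ hZ0 hZb (hfint (ck k) (hckmeas k) (hcksimplex k))
        (hfint (bstar n) (hbstarmeas n) (hbstarsimplex n)) (hopt n (ck k) (hckmeas k) (hcksimplex k))
    set hk : ℕ → Ω → ℝ := fun k ω =>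
      (Real.log ((1 - u k) * den n ω + u k * num n ω) - Real.log (den n ω)) / (u k) with hhk
    have hhkmeas : ∀ k, Measurable (hk k) := by
      intro k
      exact (((measurable_const.mul (hdenmeas n)).add
        (measurable_const.mul (hnummeas n))).log.sub (hdenmeas n).log).div_const _
    have hf0 : Integrable (fun ω => Real.log (den n ω)) P :=
      hfint (bstar n) (hbstarmeas n) (hbstarsimplex n)
    have hhkint : ∀ k, Integrable (hk k) P := by
      intro k
      have h1 : Integrable (fun ω => Real.log ((1 - u k) * den n ω + u k * num n ω)) P := by
        refine (hfint (ck k) (hckmeas k) (hcksimplex k)).congr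
          (Eventually.of_forall fun ω => ?_)
        exact congrArg Real.log (hsum_eq k ω)
      exact (h1.sub hf0).div_const (u k)
    have hZhk : ∀ k, ∫ ω, Z ω * hk k ω ∂P ≤ 0 := by
      intro k
      have hfk := hfint (ck k) (hckmeas k) (hcksimplex k)
      have hZfk : Integrable
          (fun ω => Z ω * Real.log (∑ j, ck k (hist n ω) j * X ((n:ℤ)+1) ω j)) P :=
        hfk.bdd_mul hZm0.aestronglyMeasurable (ae_of_all _ hZnorm.choose_spec)
      have hZf0 : Integrable (fun ω => Z ω * Real.log (den n ω)) P :=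
        hf0.bdd_mul hZm0.aestronglyMeasurable (ae_of_all _ hZnorm.choose_spec)
      have heq : (fun ω => Z ω * hk k ω) = fun ω =>
          (1/(u k)) * (Z ω * Real.log (∑ j, ck k (hist n ω) j * X ((n:ℤ)+1) ω j)
            - Z ω * Real.log (den n ω)) := by
        funext ω
        rw [hsum_eq k ω]
        simp only [hhk]
        ring
      rw [heq, integral_const_mul, integral_sub hZfk hZf0]
      have hd : ∫ ω, Z ω * Real.log (∑ j, ck k (hist n ω) j * X ((n:ℤ)+1) ω j) ∂P
          - ∫ ω, Z ω * Real.log (den n ω) ∂P ≤ 0 := sub_nonpos.mpr (hZle k)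
      have hpos : (0:ℝ) ≤ 1/(u k) := le_of_lt (by positivity)
      nlinarith
    have hZmin_int : ∀ k, Integrable (fun ω => Z ω * min (hk k ω) (M-1)) P := by
      intro k
      have h1 : Integrable (fun ω => min (hk k ω) (M-1)) P := by
        refine ((hhkint k).inf (integrable_const (M-1))).congr
          (Eventually.of_forall fun ω => ?_)
        rfl
      exact h1.bdd_mul hZm0.aestronglyMeasurable (ae_of_all _ hZnorm.choose_spec)
    have hZmin_le : ∀ k, ∫ ω, Z ω * min (hk k ω) (M-1) ∂P ≤ 0 := by
      intro k
      refine le_trans (integral_mono (hZmin_int k)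
        ((hhkint k).bdd_mul hZm0.aestronglyMeasurable (ae_of_all _ hZnorm.choose_spec)) ?_) (hZhk k)
      intro ω
      exact mul_le_mul_of_nonneg_left (min_le_left _ _) (hZ0 ω)
    have hlb : ∀ k ω, Real.log (num n ω) - Real.log (den n ω) ≤ hk k ω := by
      intro k ω
      simp only [hhk]
      exact my_slope_lb (hdenpos n ω) (hnumpos n ω) (hu0 k) (hu1 k)
    have hgb_num : ∀ ω, |Real.log (num n ω)| ≤ ∑ j, |Real.log (X ((n:ℤ)+1) ω j)| :=
      fun ω => my_simplex_dot_log_abs (hbsimplex n _) (fun j => hXpos _ ω j)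
    have hgb_den : ∀ ω, |Real.log (den n ω)| ≤ ∑ j, |Real.log (X ((n:ℤ)+1) ω j)| :=
      fun ω => my_simplex_dot_log_abs (hbstarsimplex n _) (fun j => hXpos _ ω j)
    have habs : ∀ k ω, |min (hk k ω) (M-1)|
        ≤ (|Real.log (num n ω)| + |Real.log (den n ω)|) + |M-1| := by
      intro k ω
      rw [abs_le]
      constructor
      · have h1 := hlb k ω
        have h2 : min (Real.log (num n ω) - Real.log (den n ω)) (M-1) ≤ min (hk k ω) (M-1) :=
          min_le_min h1 le_rfl
        have h3 : -((|Real.log (num n ω)| + |Real.log (den n ω)|) + |M-1|)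
            ≤ min (Real.log (num n ω) - Real.log (den n ω)) (M-1) := by
          refine le_min ?_ ?_
          · have := neg_abs_le (Real.log (num n ω))
            have := le_abs_self (Real.log (den n ω))
            have := abs_nonneg (M-1)
            linarith
          · have := neg_abs_le (M-1)
            have := abs_nonneg (Real.log (num n ω))
            have := abs_nonneg (Real.log (den n ω))
            linarith
        linarith
      · have := le_abs_self (M-1)
        have := abs_nonneg (Real.log (num n ω))
        have := abs_nonneg (Real.log (den n ω))
        have := min_le_right (hk k ω) (M-1)
        linarith
    have hdct : Tendsto (fun k => ∫ ω, Z ω * min (hk k ω) (M-1) ∂P) atTop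
        (nhds (∫ ω, Z ω * min (R n ω - 1) (M-1) ∂P)) := by
      apply tendsto_integral_of_dominated_convergence
        (bound := fun ω => |C| * ((∑ j, |Real.log (X ((n:ℤ)+1) ω j)|
          + ∑ j, |Real.log (X ((n:ℤ)+1) ω j)|) + |M-1|))
      · intro k
        exact (hZm0.mul ((hhkmeas k).min measurable_const)).aestronglyMeasurable
      · exact (((hgbint n).add (hgbint n)).add (integrable_const |M-1|)).const_mul |C|
      · intro k
        refine Eventually.of_forall fun ω => ?_
        rw [Real.norm_eq_abs, abs_mul]
        have h1 : |Z ω| ≤ |C| := by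
          rw [abs_of_nonneg (hZ0 ω)]; exact le_trans (hZb ω) (le_abs_self C)
        refine mul_le_mul h1 ?_ (abs_nonneg _) (abs_nonneg _)
        refine le_trans (habs k ω) ?_
        have := hgb_num ω
        have := hgb_den ω
        linarith
      · refine Eventually.of_forall fun ω => ?_
        have h1 : Tendsto (fun k => hk k ω) atTop (nhds (num n ω / den n ω - 1)) := by
          have := my_slope_tendsto (hdenpos n ω) (c := num n ω) (fun k => (hu0 k).ne') hulim
          exact this
        have h2 : Continuous (fun x : ℝ => Z ω * min x (M-1)) :=
          continuous_const.mul (continuous_id.min continuous_const)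
        exact (h2.tendsto _).comp h1
    have hfinal0 : ∫ ω, Z ω * min (R n ω - 1) (M-1) ∂P ≤ 0 := le_of_tendsto' hdct hZmin_le
    have hZmin1_int : Integrable (fun ω => Z ω * min (R n ω - 1) (M-1)) P := by
      refine Integrable.mono' (integrable_const (|C| * (1 + |M-1|)))
        ((hZm0.mul (((hRmeas n).sub_const 1).min measurable_const)).aestronglyMeasurable)
        (Eventually.of_forall fun ω => ?_)
      rw [Real.norm_eq_abs, abs_mul]
      have h1 : |Z ω| ≤ |C| := by
        rw [abs_of_nonneg (hZ0 ω)]; exact le_trans (hZb ω) (le_abs_self C)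
      refine mul_le_mul h1 ?_ (abs_nonneg _) (abs_nonneg _)
      rw [abs_le]
      constructor
      · refine le_trans ?_ (min_le_min (by linarith [hRpos n ω] : (-1:ℝ) ≤ R n ω - 1) le_rfl)
        refine le_min ?_ ?_
        · have := abs_nonneg (M-1); linarith
        · have := neg_abs_le (M-1); linarith
      · have := le_abs_self (M-1)
        have := min_le_right (R n ω - 1) (M-1)
        linarith
    have hsplit : ∫ ω, Z ω * min (R n ω) M ∂P
        = ∫ ω, Z ω ∂P + ∫ ω, Z ω * min (R n ω - 1) (M-1) ∂P := by
      rw [← integral_add hZint hZmin1_int]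
      refine integral_congr_ae (Eventually.of_forall fun ω => ?_)
      show Z ω * min (R n ω) M = Z ω + Z ω * min (R n ω - 1) (M - 1)
      rw [← my_min_sub_one (R n ω) M]
      ring
    rw [hsplit]
    linarith
  -- wealth-ratio truncated expectation bound by induction
  have hWM1 : ∀ (M n : ℕ), ∫ ω, WM M n ω ∂P ≤ 1 := by
    intro M n
    induction n with
    | zero =>
        have heq : (fun ω => WM M 0 ω) = fun _ => (1:ℝ) := by
          funext ω; simp [hWM]
        rw [heq, integral_const]
        simp
    | succ n ih =>
        have hstep := key n (WM M n) ((M:ℝ)^n) (hWMFn M n) (fun ω => hWMnonneg M n ω)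
          (fun ω => hWMle M n ω) (M:ℝ)
        have heq : (fun ω => WM M (n+1) ω) = fun ω => WM M n ω * min (R n ω) (M:ℝ) := by
          funext ω
          simp only [hWM]
          rw [Finset.prod_range_succ]
        calc ∫ ω, WM M (n+1) ω ∂P = ∫ ω, WM M n ω * min (R n ω) (M:ℝ) ∂P := by rw [heq]
          _ ≤ ∫ ω, WM M n ω ∂P := hstep
          _ ≤ 1 := ih
  -- Markov inequality for the full wealth ratio
  have markov : ∀ (n : ℕ) (a : ℝ), 0 < a →
      P {ω | a ≤ ∏ i ∈ Finset.range n, R i ω} ≤ ENNReal.ofReal (1/a) := by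
    intro n a ha
    have hsub : {ω | a ≤ ∏ i ∈ Finset.range n, R i ω} ⊆ ⋃ M : ℕ, {ω | a ≤ WM M n ω} := by
      intro ω hω
      obtain ⟨M, hM⟩ := exists_nat_ge (∑ i ∈ Finset.range n, |R i ω|)
      refine Set.mem_iUnion.mpr ⟨M, ?_⟩
      have heq : WM M n ω = ∏ i ∈ Finset.range n, R i ω := by
        refine Finset.prod_congr rfl fun i hi => min_eq_left ?_
        refine le_trans (le_abs_self _) (le_trans ?_ hM)
        exact Finset.single_le_sum (f := fun i => |R i ω|) (fun i _ => abs_nonneg _) hi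
      show a ≤ WM M n ω
      rw [heq]
      exact hω
    have hmono : Monotone (fun M : ℕ => {ω | a ≤ WM M n ω}) := by
      intro M M' hMM' ω hω
      have hω' : a ≤ WM M n ω := hω
      show a ≤ WM M' n ω
      refine le_trans hω' ?_
      refine Finset.prod_le_prod (fun i _ => le_min (hRpos i ω).le (Nat.cast_nonneg M)) ?_
      exact fun i _ => min_le_min le_rfl (Nat.cast_le.mpr hMM')
    calc P {ω | a ≤ ∏ i ∈ Finset.range n, R i ω} ≤ P (⋃ M : ℕ, {ω | a ≤ WM M n ω}) :=
          measure_mono hsub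
      _ = ⨆ M : ℕ, P {ω | a ≤ WM M n ω} := hmono.measure_iUnion
      _ ≤ ENNReal.ofReal (1/a) := by
          refine iSup_le fun M => ?_
          have h1 := mul_meas_ge_le_integral_of_nonneg
            (Eventually.of_forall fun ω => hWMnonneg M n ω) (hWMint M n) a
          have h2 : (P {ω | a ≤ WM M n ω}).toReal ≤ 1/a := by
            rw [le_div_iff₀ ha]
            have := hWM1 M n
            nlinarith [h1, measureReal_def P {ω | a ≤ WM M n ω}]
          calc P {ω | a ≤ WM M n ω}
              = ENNReal.ofReal ((P {ω | a ≤ WM M n ω}).toReal) :=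
                (ENNReal.ofReal_toReal (measure_ne_top P _)).symm
            _ ≤ ENNReal.ofReal (1/a) := ENNReal.ofReal_le_ofReal h2
  -- Borel-Cantelli
  have bc : ∀ k : ℕ, ∀ᵐ ω ∂P, ∀ᶠ n : ℕ in atTop,
      S n ω / Sstar n ω < Real.exp ((1/((k:ℝ)+1)) * n) := by
    intro k
    set ε : ℝ := 1/((k:ℝ)+1) with hε
    have hεpos : 0 < ε := by positivity
    have hsum : (∑' n : ℕ, P {ω | Real.exp (ε * n) ≤ S n ω / Sstar n ω}) ≠ ⊤ := by
      have hle : ∀ n : ℕ, P {ω | Real.exp (ε * n) ≤ S n ω / Sstar n ω}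
          ≤ (ENNReal.ofReal (Real.exp (-ε)))^n := by
        intro n
        have h1 : {ω | Real.exp (ε * n) ≤ S n ω / Sstar n ω}
            = {ω | Real.exp (ε * n) ≤ ∏ i ∈ Finset.range n, R i ω} := by
          ext ω
          rw [Set.mem_setOf_eq, Set.mem_setOf_eq, hW]
        rw [h1]
        refine le_trans (markov n (Real.exp (ε * n)) (Real.exp_pos _)) ?_
        have h2 : (1:ℝ)/Real.exp (ε * n) = Real.exp (-ε)^n := by
          rw [one_div, ← Real.exp_neg, ← Real.exp_nat_mul]
          ring_nf
        rw [h2, ENNReal.ofReal_pow (Real.exp_nonneg _)]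
      refine ne_top_of_le_ne_top ?_ (ENNReal.tsum_le_tsum hle)
      rw [ENNReal.tsum_geometric]
      refine ENNReal.inv_ne_top.mpr ?_
      have hr : ENNReal.ofReal (Real.exp (-ε)) < 1 :=
        ENNReal.ofReal_lt_one.mpr (Real.exp_lt_one_iff.mpr (by linarith))
      exact (tsub_pos_of_lt hr).ne'
    filter_upwards [ae_eventually_notMem hsum] with ω hω
    filter_upwards [hω] with n hn
    exact not_le.mp hn
  -- conclusion
  filter_upwards [ae_all_iff.mpr bc] with ω hω
  have hLle : ∀ k : ℕ,
      limsup (fun n : ℕ => (((1 : ℝ) / n * Real.log (S n ω / Sstar n ω) : ℝ) : EReal)) atTop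
        ≤ ((1/((k:ℝ)+1) : ℝ) : EReal) := by
    intro k
    refine limsup_le_of_le (by isBoundedDefault) ?_
    filter_upwards [hω k, eventually_ge_atTop 1] with n hn hn1
    rw [EReal.coe_le_coe_iff]
    have hWpos : 0 < S n ω / Sstar n ω := by
      rw [hW]
      exact Finset.prod_pos fun i _ => hRpos i ω
    have hlog : Real.log (S n ω / Sstar n ω) < (1/((k:ℝ)+1)) * n := by
      have := Real.log_lt_log hWpos hn
      rwa [Real.log_exp] at this
    have hn0 : (0:ℝ) < n := by exact_mod_cast hn1
    calc (1:ℝ)/n * Real.log (S n ω / Sstar n ω) ≤ 1/n * ((1/((k:ℝ)+1)) * n) := by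
          apply mul_le_mul_of_nonneg_left hlog.le (by positivity)
      _ = 1/((k:ℝ)+1) := by field_simp
  by_contra hL
  push_neg at hL
  obtain ⟨x, hx0, hxL⟩ := EReal.exists_between_coe_real hL
  have hx0' : (0:ℝ) < x := by exact_mod_cast hx0
  obtain ⟨k, hk⟩ := exists_nat_one_div_lt hx0'
  have hcon : ((1/((k:ℝ)+1) : ℝ) : EReal) < (x : EReal) := by exact_mod_cast hk
  exact absurd (lt_of_le_of_lt (hLle k) hcon) (not_lt.mpr hxL.le)
end
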